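/- arXiv:1207.5381 — 5 statements merged into one kernel-verified Lean document; each statement's English description precedes it below -/
import Mathlib

section
/- If a graph G is not k-connected but is connected and has at least k+1 vertices, then there exists a vertex set S with |S| ≤ k-1 such that G \ S is disconnected, S is inclusion-minimal with this property, and there exist two vertices u, v at distance 2 in G that cannot be joined by k independent paths in G. -/
open Finset

variable {V : Type*} [DecidableEq V]

/-- A (finite abstract) simplicial complex: a nonempty, downward closed family of finite
vertex sets (the empty face is always included). -/
def IsComplex (K : Set (Finset V)) : Prop :=
  K.Nonempty ∧ ∀ σ ∈ K, ∀ τ : Finset V, τ ⊆ σ → τ ∈ K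

/-- A facet: a face maximal under inclusion. -/
def IsFacet (K : Set (Finset V)) (F : Finset V) : Prop :=
  F ∈ K ∧ ∀ G ∈ K, F ⊆ G → G = F

/-- PureCplx of dimension `d`: every face is contained in a facet and all facets have `d+1` vertices. -/
def PureCplx (K : Set (Finset V)) (d : ℕ) : Prop :=
  (∀ σ ∈ K, ∃ F, IsFacet K F ∧ σ ⊆ F) ∧ ∀ F, IsFacet K F → F.card = d + 1

def IsVertex (K : Set (Finset V)) (x : V) : Prop := ({x} : Finset V) ∈ K

/-- The 1-skeleton graph of a complex (on the ambient vertex type). -/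
def skeleton (K : Set (Finset V)) : SimpleGraph V where
  Adj x y := x ≠ y ∧ ({x, y} : Finset V) ∈ K
  symm := by
    constructor
    intro x y h
    exact ⟨h.1.symm, by rw [Finset.pair_comm]; exact h.2⟩
  loopless := ⟨fun x h => h.1 rfl⟩

/-- A clique of the 1-skeleton of `K`. -/
def IsCliqueIn (K : Set (Finset V)) (T : Finset V) : Prop :=
  ∀ u ∈ T, ∀ v ∈ T, u ≠ v → ({u, v} : Finset V) ∈ K

/-- A critical clique: removing some vertex yields a face. -/
def IsCritical (K : Set (Finset V)) (T : Finset V) : Prop :=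
  ∃ v ∈ T, T.erase v ∈ K

/-- `K` contains the boundary complex of a `(d+1)`-simplex as a subcomplex. -/
def ContainsSimplexBoundary (K : Set (Finset V)) (d : ℕ) : Prop :=
  ∃ S : Finset V, S.card = d + 2 ∧ ∀ τ : Finset V, τ ⊆ S → τ ≠ S → τ ∈ K

/-- Banner (for a pure `d`-complex): every critical `(d+1)`-clique is spanning and no
boundary of a `(d+1)`-simplex occurs as a subcomplex. -/
def Banner (K : Set (Finset V)) (d : ℕ) : Prop :=
  (∀ T : Finset V, IsCliqueIn K T → T.card = d + 1 → IsCritical K T → T ∈ K) ∧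
    ¬ ContainsSimplexBoundary K d

/-- Strongly banner: every `(d+1)`-clique is spanning and no boundary of a `(d+1)`-simplex
occurs as a subcomplex. -/
def StronglyBanner (K : Set (Finset V)) (d : ℕ) : Prop :=
  (∀ T : Finset V, IsCliqueIn K T → T.card = d + 1 → T ∈ K) ∧
    ¬ ContainsSimplexBoundary K d

/-- FlagCplx: every clique of the 1-skeleton is a face. -/
def FlagCplx (K : Set (Finset V)) : Prop :=
  ∀ T : Finset V, IsCliqueIn K T → T ∈ K

/-- The link of a face `σ`. -/
def link (K : Set (Finset V)) (σ : Finset V) : Set (Finset V) :=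
  {τ : Finset V | Disjoint τ σ ∧ τ ∪ σ ∈ K}

/-- The facet graph of a pure `d`-complex: facets adjacent when they share a `(d-1)`-face
(i.e. their intersection has `d` vertices). -/
def facetGraph (K : Set (Finset V)) (d : ℕ) : SimpleGraph {F : Finset V // IsFacet K F} where
  Adj F G := F ≠ G ∧ ((F : Finset V) ∩ (G : Finset V)).card = d
  symm := by
    constructor
    intro F G h
    exact ⟨h.1.symm, by rw [Finset.inter_comm]; exact h.2⟩
  loopless := ⟨fun F h => h.1 rfl⟩

/-- Strong connectivity: the facet graph is connected. -/
def StronglyConnected (K : Set (Finset V)) (d : ℕ) : Prop :=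
  (facetGraph K d).Connected

/-- A `d`-dimensional pseudomanifold: pure `d`-complex, every `(d-1)`-face is in exactly
two facets, and the facet graph is connected. -/
def Pseudomanifold (K : Set (Finset V)) (d : ℕ) : Prop :=
  IsComplex K ∧ PureCplx K d ∧
    (∀ σ ∈ K, σ.card = d → {F : Finset V | IsFacet K F ∧ σ ⊆ F}.ncard = 2) ∧
    StronglyConnected K d

/-- Connectivity of a complex: the 1-skeleton induced on its vertex set is connected. -/
def ComplexConnected (K : Set (Finset V)) : Prop :=
  ((skeleton K).induce {x : V | IsVertex K x}).Connected

/-- A normal pseudomanifold: all links of faces of dimension at least one are connected. -/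
def NormalPM (K : Set (Finset V)) (d : ℕ) : Prop :=
  Pseudomanifold K d ∧ ∀ σ ∈ K, σ.card + 1 ≤ d → ComplexConnected (link K σ)

/-- The closed neighborhood `N(x)`: `x` together with its neighbors. -/
def closedNbhd (K : Set (Finset V)) (x : V) : Set V :=
  {x} ∪ {z : V | ({x, z} : Finset V) ∈ K}

/-- The subcomplex induced on a set `A` of vertices. -/
def inducedSub (K : Set (Finset V)) (A : Set V) : Set (Finset V) :=
  {σ ∈ K | ∀ v ∈ σ, v ∈ A}

/-- The antistar of a vertex: the induced subcomplex on all other vertices. -/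
def antistar (K : Set (Finset V)) (x : V) : Set (Finset V) :=
  {σ ∈ K | x ∉ σ}

/-- `K` is the boundary of a triangle, i.e. the 3-cycle `C₃`. -/
def IsC3 (K : Set (Finset V)) : Prop :=
  ∃ a b c : V, a ≠ b ∧ a ≠ c ∧ b ≠ c ∧
    K = {τ : Finset V | τ ⊆ ({a, b, c} : Finset V) ∧ τ ≠ ({a, b, c} : Finset V)}

/-- The banner number of a pure `d`-complex. -/
noncomputable def bannerNumber (K : Set (Finset V)) (d : ℕ) : ℕ :=
  sInf {j : ℕ | ∀ σ ∈ K, σ.card = j → Banner (link K σ) (d - j) ∨ IsC3 (link K σ)}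

/-- `k`-connectivity of a graph: more than `k` vertices, and removing fewer than `k`
vertices leaves it connected. -/
def KConnected {W : Type*} [Fintype W] [DecidableEq W] (G : SimpleGraph W) (k : ℕ) : Prop :=
  k < Fintype.card W ∧
    ∀ S : Finset W, S.card < k → (G.induce ((↑S : Set W)ᶜ)).Connected

/-- Existence of `k` pairwise independent `u`–`v` paths: paths sharing no vertices other
than `u` and `v`. -/
def IndepPaths {W : Type*} (G : SimpleGraph W) (u v : W) (k : ℕ) : Prop :=
  ∃ p : Fin k → G.Walk u v, (∀ i, (p i).IsPath) ∧
    ∀ i j, i ≠ j → ∀ w : W, w ∈ (p i).support → w ∈ (p j).support → w = u ∨ w = v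

section Aux

variable {W : Type*} {G : SimpleGraph W} {s : Set W}

lemma reach_of_walk : ∀ {u v : W} (p : G.Walk u v), (∀ w ∈ p.support, w ∈ s) →
    ∀ (hu : u ∈ s) (hv : v ∈ s), (G.induce s).Reachable ⟨u, hu⟩ ⟨v, hv⟩ := by
  intro u v p
  induction p with
  | nil => intro _ hu hv; exact SimpleGraph.Reachable.refl _
  | @cons u b v h q ih =>
    intro hp hu hv
    have hb : b ∈ s := hp b (by simp)
    have hadj : (G.induce s).Adj ⟨u, hu⟩ ⟨b, hb⟩ := h
    exact hadj.reachable.trans (ih (fun w hw => hp w (by simp [hw])) hb hv)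

lemma walk_of_reach [DecidableEq W] {u v : W} (hu : u ∈ s) (hv : v ∈ s)
    (h : (G.induce s).Reachable ⟨u, hu⟩ ⟨v, hv⟩) :
    ∃ p : G.Walk u v, p.IsPath ∧ ∀ w ∈ p.support, w ∈ s := by
  obtain ⟨q⟩ := h
  let q' := q.toPath
  let f : G.induce s →g G := ⟨Subtype.val, fun h => h⟩
  refine ⟨(q'.val.map f), SimpleGraph.Walk.map_isPath_of_injective Subtype.val_injective q'.2, ?_⟩
  intro w hw
  rw [SimpleGraph.Walk.support_map] at hw
  obtain ⟨x, _, rfl⟩ := List.mem_map.mp hw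
  exact x.2

end Aux

/-- If a connected graph with at least `k+1` vertices is not `k`-connected, there is an
inclusion-minimal disconnecting set of at most `k-1` vertices, and a pair of vertices at
distance 2 not joined by `k` independent paths. -/


theorem exists_min_cut_and_bad_pair {W : Type*} [Fintype W] [DecidableEq W]
    (G : SimpleGraph W) (k : ℕ)
    (hnk : ¬ KConnected G k) (hconn : G.Connected) (hcard : k + 1 ≤ Fintype.card W) :
    ∃ S : Finset W, S.card ≤ k - 1 ∧ ¬ (G.induce ((↑S : Set W)ᶜ)).Connected ∧
      (∀ T : Finset W, T ⊂ S → (G.induce ((↑T : Set W)ᶜ)).Connected) ∧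
      ∃ u v : W, G.dist u v = 2 ∧ ¬ IndepPaths G u v k := by
  classical
  have hk1 : k < Fintype.card W := by omega
  rw [KConnected, not_and] at hnk
  have hex := hnk hk1
  push_neg at hex
  obtain ⟨S0, hS0k, hS0dis⟩ := hex
  have hE : ∃ n, ∃ S : Finset W, S.card = n ∧ S.card < k ∧
      ¬ (G.induce ((↑S : Set W)ᶜ)).Connected := ⟨S0.card, S0, rfl, hS0k, hS0dis⟩
  obtain ⟨S, hScard, hSk, hSdis⟩ := Nat.find_spec hE
  have hmin : ∀ T : Finset W, T ⊂ S → (G.induce ((↑T : Set W)ᶜ)).Connected := by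
    intro T hT
    by_contra hc
    have hlt : T.card < Nat.find hE := hScard ▸ Finset.card_lt_card hT
    exact Nat.find_min hE hlt ⟨T, rfl, by
      have := Finset.card_lt_card hT; omega, hc⟩
  refine ⟨S, by omega, hSdis, hmin, ?_⟩
  have hk0 : 1 ≤ k := by omega
  -- nonemptiness of the complement
  have hcardW : S.card < Fintype.card W := by omega
  have hSsub : ∃ y, y ∉ S := by
    by_contra hno
    push_neg at hno
    have : S = Finset.univ := Finset.eq_univ_iff_forall.mpr hno
    rw [this, Finset.card_univ] at hcardW
    omega
  obtain ⟨y, hy⟩ := hSsub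
  haveI : Nonempty ((↑S : Set W)ᶜ : Set W) := ⟨⟨y, by simp [hy]⟩⟩
  have hnp : ¬ (G.induce ((↑S : Set W)ᶜ)).Preconnected := fun h => hSdis ⟨h⟩
  rw [SimpleGraph.Preconnected] at hnp
  push_neg at hnp
  obtain ⟨⟨a, haS⟩, ⟨b, hbS⟩, hab⟩ := hnp
  have haS' : a ∉ S := by simpa using haS
  have hbS' : b ∉ S := by simpa using hbS
  -- S is nonempty
  have hSne : S.Nonempty := by
    rcases Finset.eq_empty_or_nonempty S with h | h
    · exfalso
      subst h
      obtain ⟨w⟩ := hconn a b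
      exact hab (reach_of_walk w (fun z _ => by simp) haS hbS)
    · exact h
  obtain ⟨x, hxS⟩ := hSne
  set T := S.erase x with hT
  have hTconn := hmin T (Finset.erase_ssubset hxS)
  have haT : a ∈ ((↑T : Set W)ᶜ : Set W) := by simp [hT]; intro h; exact absurd h haS'
  have hbT : b ∈ ((↑T : Set W)ᶜ : Set W) := by simp [hT]; intro h; exact absurd h hbS'
  obtain ⟨q, hqpath, hqsupp⟩ := walk_of_reach haT hbT (hTconn.preconnected _ _)
  -- every vertex on q other than x avoids S
  have hTnotS : ∀ w : W, w ∈ ((↑T : Set W)ᶜ : Set W) → w ≠ x → w ∉ S := by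
    intro w hw hwx hwS
    exact hw (by simp [hT, Finset.mem_erase, hwx, hwS])
  have hax : a ≠ x := fun h => haS' (h ▸ hxS)
  have hbx : b ≠ x := fun h => hbS' (h ▸ hxS)
  -- x must lie on q
  have hx_in : x ∈ q.support := by
    by_contra hxn
    refine hab (reach_of_walk q (fun w hw => ?_) haS hbS)
    have hwT := hqsupp w hw
    have hwx : w ≠ x := fun h => hxn (h ▸ hw)
    simpa using hTnotS w hwT hwx
  -- split q at x
  set q1 := q.takeUntil x hx_in with hq1
  set q2 := q.dropUntil x hx_in with hq2
  have hspec : q1.append q2 = q := q.take_spec hx_in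
  have hnodup : q.support.Nodup := hqpath.support_nodup
  have hsupp_eq : q.support = q1.support ++ q2.support.tail := by
    rw [← hspec, SimpleGraph.Walk.support_append]
  have hq1sub : ∀ w ∈ q1.support, w ∈ q.support := fun w hw => by
    rw [hsupp_eq]; exact List.mem_append_left _ hw
  have hq2sub : ∀ w ∈ q2.support.tail, w ∈ q.support := fun w hw => by
    rw [hsupp_eq]; exact List.mem_append_right _ hw
  -- first neighbour u : from q1.reverse : Walk x a
  obtain ⟨u, hadjxu, r, hr⟩ := SimpleGraph.Walk.exists_eq_cons_of_ne (hax.symm) q1.reverse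
  -- second neighbour v : from q2 : Walk x b
  obtain ⟨v, hadjxv, r2, hr2⟩ := SimpleGraph.Walk.exists_eq_cons_of_ne (hbx.symm) q2
  -- x not in r.support
  have hq1nodup : q1.support.Nodup := by
    rw [hsupp_eq] at hnodup
    exact hnodup.of_append_left
  have hrsupp_eq : q1.support.reverse = x :: r.support := by
    rw [← SimpleGraph.Walk.support_reverse, hr, SimpleGraph.Walk.support_cons]
  have hxr : x ∉ r.support := by
    have := List.nodup_reverse.mpr hq1nodup
    rw [hrsupp_eq] at this
    exact (List.nodup_cons.mp this).1
  -- x not in r2.support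
  have hq2tail : q2.support.tail = r2.support := by
    rw [hr2, SimpleGraph.Walk.support_cons, List.tail_cons]
  have hxr2 : x ∉ r2.support := by
    rw [hsupp_eq] at hnodup
    have hdisj := List.disjoint_of_nodup_append hnodup
    intro hmem
    exact hdisj (q1.end_mem_support) (hq2tail ▸ hmem)
  -- memberships
  have hrsub : ∀ w ∈ r.support, w ∈ q.support := by
    intro w hw
    apply hq1sub
    have : w ∈ q1.support.reverse := by rw [hrsupp_eq]; exact List.mem_cons_of_mem _ hw
    exact List.mem_reverse.mp this
  have hr2sub : ∀ w ∈ r2.support, w ∈ q.support := fun w hw => hq2sub w (hq2tail ▸ hw)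
  have hravoid : ∀ w ∈ r.support, w ∈ ((↑S : Set W)ᶜ : Set W) := by
    intro w hw
    have hwx : w ≠ x := fun h => hxr (h ▸ hw)
    simpa using hTnotS w (hqsupp w (hrsub w hw)) hwx
  have hr2avoid : ∀ w ∈ r2.support, w ∈ ((↑S : Set W)ᶜ : Set W) := by
    intro w hw
    have hwx : w ≠ x := fun h => hxr2 (h ▸ hw)
    simpa using hTnotS w (hqsupp w (hr2sub w hw)) hwx
  have huS : u ∈ ((↑S : Set W)ᶜ : Set W) := hravoid u r.start_mem_support
  have hvS : v ∈ ((↑S : Set W)ᶜ : Set W) := hr2avoid v r2.start_mem_support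
  have huS' : u ∉ S := by simpa using huS
  have hvS' : v ∉ S := by simpa using hvS
  -- reachability from u to a and v to b in G - S
  have reach1 : (G.induce ((↑S : Set W)ᶜ)).Reachable ⟨u, huS⟩ ⟨a, haS⟩ :=
    reach_of_walk r hravoid huS haS
  have reach2 : (G.induce ((↑S : Set W)ᶜ)).Reachable ⟨v, hvS⟩ ⟨b, hbS⟩ :=
    reach_of_walk r2 hr2avoid hvS hbS
  have hnuv : ¬ (G.induce ((↑S : Set W)ᶜ)).Reachable ⟨u, huS⟩ ⟨v, hvS⟩ := by
    intro h
    exact hab ((reach1.symm.trans h).trans reach2)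
  have huv : u ≠ v := by
    intro h
    subst h
    exact hnuv (SimpleGraph.Reachable.refl _)
  have hnadj : ¬ G.Adj u v := by
    intro h
    exact hnuv (SimpleGraph.Adj.reachable (by exact h : (G.induce ((↑S : Set W)ᶜ)).Adj ⟨u, huS⟩ ⟨v, hvS⟩))
  refine ⟨u, v, ?_, ?_⟩
  · -- distance 2
    have hle : G.dist u v ≤ 2 := by
      simpa using SimpleGraph.dist_le
        (SimpleGraph.Walk.cons hadjxu.symm (SimpleGraph.Walk.cons hadjxv SimpleGraph.Walk.nil))
    have hne0 : G.dist u v ≠ 0 := by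
      simp only [ne_eq, SimpleGraph.dist_eq_zero_iff_eq_or_not_reachable, not_or, not_not]
      exact ⟨huv, ⟨SimpleGraph.Walk.cons hadjxu.symm
        (SimpleGraph.Walk.cons hadjxv SimpleGraph.Walk.nil)⟩⟩
    have hne1 : G.dist u v ≠ 1 := by
      simp only [ne_eq, SimpleGraph.dist_eq_one_iff_adj]
      exact hnadj
    omega
  · -- no k independent paths
    rintro ⟨p, hpth, hind⟩
    have hSmeet : ∀ i, ∃ s, s ∈ S ∧ s ∈ (p i).support := by
      intro i
      by_contra hno
      push_neg at hno
      refine hnuv (reach_of_walk (p i) (fun w hw => ?_) huS hvS)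
      simp only [Set.mem_compl_iff, Finset.coe_mem, Finset.mem_coe]
      exact fun hwS => hno w hwS hw
    choose f hfS hfsupp using hSmeet
    have hinj : Function.Injective f := by
      intro i j hij
      by_contra hne
      rcases hind i j hne (f i) (hfsupp i) (hij ▸ hfsupp j) with h | h
      · exact huS' (h ▸ hfS i)
      · exact hvS' (h ▸ hfS i)
    have hcard2 : (Finset.univ : Finset (Fin k)).card ≤ S.card :=
      Finset.card_le_card_of_injOn f (fun i _ => hfS i) hinj.injOn
    rw [Finset.card_univ, Fintype.card_fin] at hcard2
    omega
end

section
/- Let Δ be a banner d-dimensional simplicial pseudomanifold and let {x,y} be an edge of Δ. Then the closed neighborhood N(y) is not contained in the closed neighborhood N(x); equivalently, there exists a vertex w adjacent to y in Δ that is not adjacent to x and distinct from x. -/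
open Finset

variable {V : Type*} [DecidableEq V]

lemma key (K : Set (Finset V)) (d : ℕ)
    (hpm : Pseudomanifold K d) (hb : Banner K d)
    (x y : V) (hxy : x ≠ y) (he : ({x, y} : Finset V) ∈ K)
    (hsub : ∀ w : V, w ≠ x → ({y, w} : Finset V) ∈ K → ({x, w} : Finset V) ∈ K) :
    False := by
  obtain ⟨⟨hne, hdown⟩, ⟨hpure, hcard⟩, htwo, -⟩ := hpm
  obtain ⟨F, hF, hxyF⟩ := hpure _ he
  have hxF : x ∈ F := hxyF (by simp)
  have hyF : y ∈ F := hxyF (by simp)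
  set σ := F.erase x with hσ
  have hσK : σ ∈ K := hdown F hF.1 σ (erase_subset _ _)
  have hσcard : σ.card = d := by
    rw [hσ, card_erase_of_mem hxF, hcard F hF]; omega
  have h2 := htwo σ hσK hσcard
  rw [Set.ncard_eq_two] at h2
  obtain ⟨A, B, hAB, hset⟩ := h2
  have hFmem : F ∈ ({A, B} : Set (Finset V)) := by
    rw [← hset]; exact ⟨hF, erase_subset _ _⟩
  -- pick G ∈ {A,B}, G ≠ F
  obtain ⟨G, hGmem, hGF⟩ : ∃ G ∈ ({A, B} : Set (Finset V)), G ≠ F := by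
    rcases hFmem with h | h
    · exact ⟨B, by simp, fun hc => hAB ((hc.trans h).symm)⟩
    · exact ⟨A, by simp, fun hc => hAB (hc.trans h)⟩
  have hGfacet : IsFacet K G ∧ σ ⊆ G := by rw [← hset] at hGmem; exact hGmem
  obtain ⟨hGf, hσG⟩ := hGfacet
  have hGcard : G.card = d + 1 := hcard G hGf
  have hxG : x ∉ G := by
    intro hxG
    have hFG : F ⊆ G := by
      intro v hv
      by_cases hvx : v = x
      · rwa [hvx]
      · exact hσG (mem_erase.mpr ⟨hvx, hv⟩)
    exact hGF (hF.2 G hGf.1 hFG)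
  have hyG : y ∈ G := hσG (mem_erase.mpr ⟨hxy.symm, hyF⟩)
  -- every vertex of G other than x (automatic) is adjacent to x
  have hadjx : ∀ w ∈ G, ({x, w} : Finset V) ∈ K := by
    intro w hw
    have hwx : w ≠ x := fun h => hxG (h ▸ hw)
    by_cases hwy : w = y
    · rwa [hwy]
    · have hyw : ({y, w} : Finset V) ∈ K := by
        apply hdown G hGf.1
        intro v hv
        simp only [mem_insert, mem_singleton] at hv
        rcases hv with rfl | rfl
        · exact hyG
        · exact hw
      exact hsub w hwx hyw
  set S := insert x G with hS
  have hScard : S.card = d + 2 := by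
    rw [hS, card_insert_of_notMem hxG, hGcard]
  apply hb.2
  refine ⟨S, hScard, ?_⟩
  intro τ hτS hτne
  have hss : τ ⊂ S := ⟨hτS, fun h => hτne (Subset.antisymm hτS h)⟩
  obtain ⟨v, hvS, hvτ⟩ := exists_of_ssubset hss
  have hτsub : τ ⊆ S.erase v := fun u hu =>
    mem_erase.mpr ⟨fun h => hvτ (h ▸ hu), hτS hu⟩
  have hSv : S.erase v ∈ K := by
    rcases mem_insert.mp hvS with rfl | hvG
    · -- v = x
      have : S.erase v = G := by
        rw [hS, erase_insert hxG]
      rw [this]; exact hGf.1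
    · -- v ∈ G
      have hvx : v ≠ x := fun h => hxG (h ▸ hvG)
      have heq : S.erase v = insert x (G.erase v) := by
        rw [hS, erase_insert_of_ne (fun h => hvx h.symm)]
      rw [heq]
      apply hb.1
      · -- clique
        intro u hu u' hu' huu'
        simp only [mem_insert, mem_erase] at hu hu'
        rcases hu with rfl | ⟨-, huG⟩
        · rcases hu' with rfl | ⟨-, hu'G⟩
          · exact absurd rfl huu'
          · exact hadjx u' hu'G
        · rcases hu' with rfl | ⟨-, hu'G⟩
          · rw [pair_comm]; exact hadjx u huG
          · apply hdown G hGf.1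
            intro z hz
            simp only [mem_insert, mem_singleton] at hz
            rcases hz with rfl | rfl
            · exact huG
            · exact hu'G
      · -- card
        rw [card_insert_of_notMem (fun h => hxG (mem_of_mem_erase h)),
          card_erase_of_mem hvG, hGcard]; omega
      · -- critical
        refine ⟨x, by simp, ?_⟩
        rw [erase_insert (fun h => hxG (mem_of_mem_erase h))]
        exact hdown G hGf.1 _ (erase_subset _ _)
  exact hdown _ hSv τ hτsub

/-- In a banner pseudomanifold, for any edge `{x,y}` the closed neighborhood of `y` is not
contained in the closed neighborhood of `x`: some neighbor of `y` is neither `x` nor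
adjacent to `x`. -/
theorem nbhd_not_subset (K : Set (Finset V)) (d : ℕ)
    (hpm : Pseudomanifold K d) (hb : Banner K d)
    (x y : V) (hxy : x ≠ y) (he : ({x, y} : Finset V) ∈ K) :
    ¬ closedNbhd K y ⊆ closedNbhd K x ∧
      ∃ w : V, w ≠ x ∧ w ≠ y ∧ ({y, w} : Finset V) ∈ K ∧ ({x, w} : Finset V) ∉ K := by
  have hex : ∃ w : V, w ≠ x ∧ w ≠ y ∧ ({y, w} : Finset V) ∈ K ∧ ({x, w} : Finset V) ∉ K := by
    by_contra hc
    push_neg at hc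
    apply key K d hpm hb x y hxy he
    intro w hwx hyw
    by_cases hwy : w = y
    · subst hwy; exact he
    · exact hc w hwx hwy hyw
  obtain ⟨w, hwx, hwy, hyw, hxw⟩ := hex
  refine ⟨?_, w, hwx, hwy, hyw, hxw⟩
  intro hsub
  have hwN : w ∈ closedNbhd K y := Or.inr hyw
  rcases hsub hwN with h | h
  · exact hwx h
  · exact hxw h
end

section
/- If Δ is a banner simplicial pseudomanifold, then the 1-skeleton graph of Δ is not a complete graph. -/
open Finset

variable {V : Type*} [DecidableEq V]

/-- The 1-skeleton of a banner pseudomanifold is not a complete graph: some two vertices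
of the complex are not joined by an edge. -/
theorem skeleton_not_complete (K : Set (Finset V)) (d : ℕ)
    (hpm : Pseudomanifold K d) (hb : Banner K d) :
    ∃ x y : V, IsVertex K x ∧ IsVertex K y ∧ x ≠ y ∧ ({x, y} : Finset V) ∉ K := by
  by_contra hcon
  push_neg at hcon
  obtain ⟨⟨hKne, hdown⟩, ⟨hpure1, hpure2⟩, htwo, _⟩ := hpm
  obtain ⟨σ0, hσ0⟩ := hKne
  obtain ⟨F, hF, _⟩ := hpure1 σ0 hσ0
  have hFcard : F.card = d + 1 := hpure2 F hF
  have hFne : F.Nonempty := Finset.card_pos.mp (by omega)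
  obtain ⟨v, hv⟩ := hFne
  set σ := F.erase v with hσdef
  have hσK : σ ∈ K := hdown F hF.1 σ (Finset.erase_subset v F)
  have hσcard : σ.card = d := by
    rw [hσdef, Finset.card_erase_of_mem hv, hFcard]; omega
  have hnc := htwo σ hσK hσcard
  -- get a second facet G ≠ F containing σ
  have hFmem : F ∈ {G : Finset V | IsFacet K G ∧ σ ⊆ G} :=
    ⟨hF, Finset.erase_subset v F⟩
  obtain ⟨G, hGmem, hGF⟩ : ∃ G ∈ {G : Finset V | IsFacet K G ∧ σ ⊆ G}, G ≠ F := by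
    by_contra hall
    push_neg at hall
    have hsub : {G : Finset V | IsFacet K G ∧ σ ⊆ G} ⊆ {F} := fun G hG => hall G hG
    have : ({G : Finset V | IsFacet K G ∧ σ ⊆ G}).ncard ≤ ({F} : Set (Finset V)).ncard :=
      Set.ncard_le_ncard hsub (Set.finite_singleton F)
    rw [Set.ncard_singleton, hnc] at this
    omega
  obtain ⟨hGfacet, hσG⟩ := hGmem
  have hGcard : G.card = d + 1 := hpure2 G hGfacet
  have hGK : G ∈ K := hGfacet.1
  -- G \ σ is a singleton {w}
  have hsd : (G \ σ).card = 1 := by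
    rw [Finset.card_sdiff_of_subset hσG, hGcard, hσcard]; omega
  obtain ⟨w, hw⟩ := Finset.card_eq_one.mp hsd
  have hwG : w ∈ G \ σ := by rw [hw]; exact Finset.mem_singleton_self w
  have hGeq : G = insert w σ := by
    have := Finset.sdiff_union_of_subset hσG
    rw [hw] at this
    rw [← this]
    ext x; simp [Finset.mem_insert, or_comm]
  have hwF : w ∉ F := by
    intro hwF
    have hwσ : w ∉ σ := (Finset.mem_sdiff.mp hwG).2
    have hwv : w = v := by
      by_contra hne
      exact hwσ (Finset.mem_erase.mpr ⟨hne, hwF⟩)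
    apply hGF
    rw [hGeq, hwv, hσdef, Finset.insert_erase hv]
  set S := insert w F with hSdef
  have hScard : S.card = d + 2 := by
    rw [hSdef, Finset.card_insert_of_notMem hwF, hFcard]
  -- all elements of S are vertices
  have hvert : ∀ x ∈ S, IsVertex K x := by
    intro x hx
    rcases Finset.mem_insert.mp hx with h | h
    · subst h
      exact hdown G hGK {x} (by
        rw [hGeq]; exact Finset.singleton_subset_iff.mpr (Finset.mem_insert_self x σ))
    · exact hdown F hF.1 {x} (Finset.singleton_subset_iff.mpr h)
  apply hb.2
  refine ⟨S, hScard, ?_⟩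
  intro τ hτS hτne
  obtain ⟨u, huS, huτ⟩ := Finset.exists_of_ssubset (lt_of_le_of_ne hτS hτne)
  have hτsub : τ ⊆ S.erase u := Finset.subset_erase.mpr ⟨hτS, huτ⟩
  suffices hSu : S.erase u ∈ K by exact hdown _ hSu τ hτsub
  by_cases huw : u = w
  · subst huw
    rw [hSdef, Finset.erase_insert hwF]
    exact hF.1
  · have huF : u ∈ F := by
      rcases Finset.mem_insert.mp huS with h | h
      · exact absurd h huw
      · exact h
    by_cases huv : u = v
    · subst huv
      have : S.erase u = insert w σ := by
        rw [hSdef, Finset.erase_insert_of_ne (fun h => huw h.symm), hσdef]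
      rw [this, ← hGeq]
      exact hGK
    · -- the banner case
      have hTeq : S.erase u = insert w (F.erase u) := by
        rw [hSdef, Finset.erase_insert_of_ne (fun h => huw h.symm)]
      have hwFu : w ∉ F.erase u := fun h => hwF (Finset.mem_of_mem_erase h)
      apply hb.1
      · intro a ha b hbmem hab
        have haS : a ∈ S := Finset.mem_of_mem_erase ha
        have hbS : b ∈ S := Finset.mem_of_mem_erase hbmem
        exact hcon a b (hvert a haS) (hvert b hbS) hab
      · rw [Finset.card_erase_of_mem huS, hScard]; omega
      · refine ⟨w, ?_, ?_⟩
        · exact Finset.mem_erase.mpr ⟨fun h => huw h.symm, Finset.mem_insert_self w F⟩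
        · rw [hTeq, Finset.erase_insert hwFu]
          exact hdown F hF.1 (F.erase u) (Finset.erase_subset u F)
end

section
/- Let Δ be a d-dimensional normal simplicial pseudomanifold with banner number b_Δ. Then the 1-skeleton graph of Δ is (2d − b_Δ)-connected. -/
open Finset

variable {V : Type*} [DecidableEq V]

section BannerDev
set_option linter.unusedSectionVars false
variable {V : Type*} [DecidableEq V]

/-- The vertex set of a complex. -/
def VS (K : Set (Finset V)) : Set V := {x | IsVertex K x}

lemma mem_VS_of_mem {K : Set (Finset V)} (hK : IsComplex K) {σ : Finset V} (hσ : σ ∈ K)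
    {v : V} (hv : v ∈ σ) : v ∈ VS K :=
  hK.2 σ hσ {v} (Finset.singleton_subset_iff.mpr hv)

lemma link_empty (K : Set (Finset V)) : link K (∅ : Finset V) = K := by
  ext τ; simp [link]

lemma mem_link {K : Set (Finset V)} {σ τ : Finset V} :
    τ ∈ link K σ ↔ Disjoint τ σ ∧ τ ∪ σ ∈ K := Iff.rfl

lemma link_link {K : Set (Finset V)} {σ τ : Finset V} (hd : Disjoint τ σ) :
    link (link K σ) τ = link K (τ ∪ σ) := by
  ext γ
  simp only [mem_link, Finset.disjoint_union_right, Finset.disjoint_union_left,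
    Finset.union_assoc]
  constructor
  · rintro ⟨h1, ⟨h2, h3⟩, h4⟩; exact ⟨⟨h1, h2⟩, h4⟩
  · rintro ⟨⟨h1, h2⟩, h3⟩; exact ⟨h1, ⟨h2, hd⟩, h3⟩

lemma vertex_link_iff {K : Set (Finset V)} {x w : V} :
    w ∈ VS (link K {x}) ↔ w ≠ x ∧ ({x, w} : Finset V) ∈ K := by
  have hu : ({w} : Finset V) ∪ {x} = {x, w} := by ext a; simp [or_comm]
  simp only [VS, IsVertex, Set.mem_setOf_eq, mem_link, hu, Finset.disjoint_singleton]

lemma VS_link_subset {K : Set (Finset V)} (hK : IsComplex K) (x : V) :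
    VS (link K {x}) ⊆ VS K := by
  intro w hw
  rw [vertex_link_iff] at hw
  exact mem_VS_of_mem hK hw.2 (by simp)

lemma not_mem_VS_link {K : Set (Finset V)} (x : V) : x ∉ VS (link K {x}) := by
  rw [vertex_link_iff]; rintro ⟨h, -⟩; exact h rfl

lemma isComplex_link {K : Set (Finset V)} (hK : IsComplex K) {σ : Finset V} (hσ : σ ∈ K) :
    IsComplex (link K σ) := by
  constructor
  · exact ⟨∅, by simp [mem_link, hσ]⟩
  · rintro τ ⟨h1, h2⟩ τ' hτ'
    exact ⟨Finset.disjoint_of_subset_left hτ' h1,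
      hK.2 _ h2 _ (Finset.union_subset_union_left hτ')⟩

lemma link_mem_of_union {K : Set (Finset V)} {σ τ : Finset V} (h : τ ∈ link K σ) :
    τ ∪ σ ∈ K := h.2

/-- faces of the link are faces of the complex. -/
lemma link_subset_of_complex {K : Set (Finset V)} (hK : IsComplex K) (σ : Finset V) :
    link K σ ⊆ K := by
  rintro τ ⟨h1, h2⟩
  exact hK.2 _ h2 _ Finset.subset_union_left

lemma facet_card {K : Set (Finset V)} {d : ℕ} (hp : PureCplx K d) {F : Finset V}
    (hF : IsFacet K F) : F.card = d + 1 := hp.2 F hF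

lemma exists_facet {K : Set (Finset V)} {d : ℕ} (hp : PureCplx K d) {σ : Finset V}
    (hσ : σ ∈ K) : ∃ F, IsFacet K F ∧ σ ⊆ F := hp.1 σ hσ

lemma face_card_le {K : Set (Finset V)} {d : ℕ} (hp : PureCplx K d) {σ : Finset V}
    (hσ : σ ∈ K) : σ.card ≤ d + 1 := by
  obtain ⟨F, hF, hsub⟩ := exists_facet hp hσ
  calc σ.card ≤ F.card := Finset.card_le_card hsub
    _ = d + 1 := facet_card hp hF

lemma facet_of_card {K : Set (Finset V)} {d : ℕ} (hp : PureCplx K d) {σ : Finset V}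
    (hσ : σ ∈ K) (hc : σ.card = d + 1) : IsFacet K σ := by
  obtain ⟨F, hF, hsub⟩ := exists_facet hp hσ
  have h : σ = F := Finset.eq_of_subset_of_card_le hsub
    (by rw [hc, facet_card hp hF])
  rw [h]; exact hF

end BannerDev

section BannerDev2
set_option linter.unusedSectionVars false
variable {V : Type*} [DecidableEq V]

lemma union_singleton_eq (τ : Finset V) (x : V) : τ ∪ {x} = insert x τ := by
  rw [Finset.union_comm, ← Finset.insert_eq]

/-- Normal pseudomanifold data without strong connectivity. -/
structure NPMp (K : Set (Finset V)) (d : ℕ) : Prop where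
  cplx : IsComplex K
  pure : PureCplx K d
  ridge2 : ∀ σ ∈ K, σ.card = d → {F : Finset V | IsFacet K F ∧ σ ⊆ F}.ncard = 2
  normal : ∀ σ ∈ K, σ.card + 1 ≤ d → ComplexConnected (link K σ)

lemma NormalPM.npmp {K : Set (Finset V)} {d : ℕ} (h : NormalPM K d) : NPMp K d :=
  ⟨h.1.1, h.1.2.1, h.1.2.2.1, h.2⟩

lemma facet_insert_of_mem_set {K : Set (Finset V)} {d : ℕ} (hp : PureCplx K d)
    {σ F : Finset V} (hσc : σ.card = d) (hF : IsFacet K F ∧ σ ⊆ F) :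
    ∃ u, u ∉ σ ∧ F = insert u σ := by
  have hcard : (F \ σ).card = 1 := by
    rw [Finset.card_sdiff_of_subset hF.2, facet_card hp hF.1, hσc]
    omega
  obtain ⟨u, hu⟩ := Finset.card_eq_one.mp hcard
  refine ⟨u, ?_, ?_⟩
  · have : u ∈ F \ σ := by rw [hu]; exact Finset.mem_singleton_self u
    exact (Finset.mem_sdiff.mp this).2
  · have := Finset.union_sdiff_of_subset hF.2
    rw [hu] at this
    rw [← this, union_singleton_eq]

lemma ridge2_explicit {K : Set (Finset V)} {d : ℕ} (h : NPMp K d) {σ : Finset V}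
    (hσ : σ ∈ K) (hc : σ.card = d) :
    ∃ u v, u ≠ v ∧ u ∉ σ ∧ v ∉ σ ∧ IsFacet K (insert u σ) ∧ IsFacet K (insert v σ) ∧
      ∀ F, IsFacet K F → σ ⊆ F → F = insert u σ ∨ F = insert v σ := by
  obtain ⟨A, B, hAB, hset⟩ := Set.ncard_eq_two.mp (h.ridge2 σ hσ hc)
  have hA : IsFacet K A ∧ σ ⊆ A := by
    have : A ∈ {F : Finset V | IsFacet K F ∧ σ ⊆ F} := by rw [hset]; simp
    exact this
  have hB : IsFacet K B ∧ σ ⊆ B := by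
    have : B ∈ {F : Finset V | IsFacet K F ∧ σ ⊆ F} := by rw [hset]; simp
    exact this
  obtain ⟨u, hu, hAu⟩ := facet_insert_of_mem_set h.pure hc hA
  obtain ⟨v, hv, hBv⟩ := facet_insert_of_mem_set h.pure hc hB
  refine ⟨u, v, ?_, hu, hv, hAu ▸ hA.1, hBv ▸ hB.1, ?_⟩
  · rintro rfl; exact hAB (by rw [hAu, hBv])
  · intro F hF hσF
    have : F ∈ {F : Finset V | IsFacet K F ∧ σ ⊆ F} := ⟨hF, hσF⟩
    rw [hset] at this
    rcases this with rfl | rfl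
    · left; exact hAu
    · right; exact hBv

lemma isFacet_link_erase {K : Set (Finset V)} {d : ℕ} (hK : IsComplex K)
    (hp : PureCplx K d) {x : V} {F : Finset V} (hF : IsFacet K F) (hx : x ∈ F) :
    IsFacet (link K {x}) (F.erase x) := by
  have hmem : F.erase x ∈ link K {x} := by
    refine ⟨by simp, ?_⟩
    rw [union_singleton_eq, Finset.insert_erase hx]
    exact hF.1
  refine ⟨hmem, ?_⟩
  rintro G ⟨hGd, hGm⟩ hsub
  have hFG : F ⊆ G ∪ {x} := by
    intro a ha
    rcases eq_or_ne a x with rfl | hax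
    · simp
    · exact Finset.mem_union_left _ (hsub (Finset.mem_erase.mpr ⟨hax, ha⟩))
  have hGF : G ∪ {x} = F := hF.2 _ hGm hFG
  have hxG : x ∉ G := by
    have := Finset.disjoint_singleton_right.mp hGd
    exact this
  rw [← hGF, union_singleton_eq, Finset.erase_insert hxG]

lemma isFacet_of_link {K : Set (Finset V)} {d : ℕ} (hK : IsComplex K)
    (hp : PureCplx K d) {x : V} {G : Finset V} (hG : IsFacet (link K {x}) G) :
    IsFacet K (insert x G) ∧ x ∉ G := by
  have hxG : x ∉ G := Finset.disjoint_singleton_right.mp hG.1.1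
  have hGK : G ∪ {x} ∈ K := hG.1.2
  rw [union_singleton_eq] at hGK
  obtain ⟨F, hF, hsub⟩ := exists_facet hp hGK
  have hxF : x ∈ F := hsub (Finset.mem_insert_self x G)
  have hGe : G ⊆ F.erase x := by
    intro a ha
    exact Finset.mem_erase.mpr ⟨fun h => hxG (h ▸ ha), hsub (Finset.mem_insert_of_mem ha)⟩
  have := (isFacet_link_erase hK hp hF hxF).1
  have heq : F.erase x = G := hG.2 _ this hGe
  have : insert x G = F := by rw [← heq, Finset.insert_erase hxF]
  rw [this]
  exact ⟨hF, hxG⟩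

lemma link_pure {K : Set (Finset V)} {d : ℕ} (h : NPMp K d) (hd : 1 ≤ d) {x : V}
    (hx : IsVertex K x) : PureCplx (link K {x}) (d - 1) := by
  constructor
  · rintro τ ⟨hτd, hτm⟩
    obtain ⟨F, hF, hsub⟩ := exists_facet h.pure hτm
    have hxF : x ∈ F := hsub (Finset.mem_union_right _ (by simp))
    refine ⟨F.erase x, isFacet_link_erase h.cplx h.pure hF hxF, ?_⟩
    intro a ha
    refine Finset.mem_erase.mpr ⟨?_, hsub (Finset.mem_union_left _ ha)⟩
    intro hax
    exact (Finset.disjoint_singleton_right.mp hτd) (hax ▸ ha)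
  · intro G hG
    obtain ⟨hF, hxG⟩ := isFacet_of_link h.cplx h.pure hG
    have := facet_card h.pure hF
    rw [Finset.card_insert_of_notMem hxG] at this
    omega

lemma link_ridge2 {K : Set (Finset V)} {d : ℕ} (h : NPMp K d) (hd : 1 ≤ d) {x : V}
    (hx : IsVertex K x) :
    ∀ τ ∈ link K {x}, τ.card = d - 1 →
      {G : Finset V | IsFacet (link K {x}) G ∧ τ ⊆ G}.ncard = 2 := by
  rintro τ ⟨hτd, hτm⟩ hτc
  have hxτ : x ∉ τ := Finset.disjoint_singleton_right.mp hτd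
  have hσm : insert x τ ∈ K := by rwa [union_singleton_eq] at hτm
  have hσc : (insert x τ).card = d := by
    rw [Finset.card_insert_of_notMem hxτ, hτc]; omega
  have himg : {G : Finset V | IsFacet (link K {x}) G ∧ τ ⊆ G} =
      (fun F => F.erase x) '' {F : Finset V | IsFacet K F ∧ insert x τ ⊆ F} := by
    ext G
    constructor
    · rintro ⟨hG, hτG⟩
      obtain ⟨hF, hxG⟩ := isFacet_of_link h.cplx h.pure hG
      refine ⟨insert x G, ⟨hF, Finset.insert_subset_insert x hτG⟩, ?_⟩
      simp [Finset.erase_insert hxG]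
    · rintro ⟨F, ⟨hF, hsub⟩, rfl⟩
      have hxF : x ∈ F := hsub (Finset.mem_insert_self x τ)
      refine ⟨isFacet_link_erase h.cplx h.pure hF hxF, ?_⟩
      intro a ha
      refine Finset.mem_erase.mpr ⟨fun hax => hxτ (hax ▸ ha), hsub (Finset.mem_insert_of_mem ha)⟩
  rw [himg, Set.ncard_image_of_injOn, h.ridge2 _ hσm hσc]
  rintro F1 ⟨hF1, hs1⟩ F2 ⟨hF2, hs2⟩ heq
  have hx1 : x ∈ F1 := hs1 (Finset.mem_insert_self x τ)
  have hx2 : x ∈ F2 := hs2 (Finset.mem_insert_self x τ)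
  have heq' : F1.erase x = F2.erase x := by simpa using heq
  have : insert x (F1.erase x) = insert x (F2.erase x) := by rw [heq']
  rwa [Finset.insert_erase hx1, Finset.insert_erase hx2] at this

lemma npmp_link {K : Set (Finset V)} {d : ℕ} (h : NPMp K d) (hd : 1 ≤ d) {x : V}
    (hx : IsVertex K x) : NPMp (link K {x}) (d - 1) := by
  refine ⟨isComplex_link h.cplx hx, link_pure h hd hx, link_ridge2 h hd hx, ?_⟩
  rintro σ ⟨hσd, hσm⟩ hσc
  rw [link_link hσd]
  apply h.normal _ hσm
  rw [union_singleton_eq, Finset.card_insert_of_notMem (Finset.disjoint_singleton_right.mp hσd)]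
  omega

end BannerDev2

section BannerDev3
set_option linter.unusedSectionVars false
variable {V : Type*} [DecidableEq V]

lemma empty_mem {K : Set (Finset V)} (hK : IsComplex K) : (∅ : Finset V) ∈ K := by
  obtain ⟨σ, hσ⟩ := hK.1
  exact hK.2 σ hσ ∅ (Finset.empty_subset σ)

/-- The defining set for the banner number. -/
def bannerSet (K : Set (Finset V)) (d : ℕ) : Set ℕ :=
  {j : ℕ | ∀ σ ∈ K, σ.card = j → Banner (link K σ) (d - j) ∨ IsC3 (link K σ)}

lemma bannerNumber_eq_sInf (K : Set (Finset V)) (d : ℕ) :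
    bannerNumber K d = sInf (bannerSet K d) := rfl

lemma bannerSet_nonempty {K : Set (Finset V)} {d : ℕ} (hp : PureCplx K d) :
    (bannerSet K d).Nonempty := by
  refine ⟨d + 2, ?_⟩
  intro σ hσ hc
  exfalso
  have := face_card_le hp hσ
  omega

lemma bannerNumber_le {K : Set (Finset V)} {d : ℕ} (hp : PureCplx K d) :
    bannerNumber K d ≤ d + 2 := by
  apply Nat.sInf_le
  intro σ hσ hc
  exfalso
  have := face_card_le hp hσ
  omega

lemma bannerNumber_mem {K : Set (Finset V)} {d : ℕ} (hp : PureCplx K d) :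
    bannerNumber K d ∈ bannerSet K d :=
  Nat.sInf_mem (bannerSet_nonempty hp)

lemma isC3_impossible {K : Set (Finset V)} {d : ℕ} (hp : PureCplx K d) (hd : 2 ≤ d)
    (h : IsC3 K) : False := by
  obtain ⟨a, b, c, hab, hac, hbc, hK⟩ := h
  have ha : ({a} : Finset V) ∈ K := by
    rw [hK]
    constructor
    · intro y hy; simp at hy; simp [hy]
    · intro h
      have : b ∈ ({a} : Finset V) := by rw [h]; simp
      simp at this
      exact hab this.symm
  obtain ⟨F, hF, hsub⟩ := exists_facet hp ha
  have hFc := facet_card hp hF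
  have hFm : F ∈ K := hF.1
  rw [hK] at hFm
  have h3 : ({a, b, c} : Finset V).card ≤ 3 := Finset.card_le_three
  have : F.card ≤ 3 := le_trans (Finset.card_le_card hFm.1) h3
  have hne : F ≠ ({a, b, c} : Finset V) := hFm.2
  have hlt : F.card < ({a, b, c} : Finset V).card :=
    Finset.card_lt_card (lt_of_le_of_ne hFm.1 hne)
  have hc3 : ({a, b, c} : Finset V).card = 3 := by
    rw [Finset.card_insert_of_notMem (by simp [hab, hac]),
      Finset.card_insert_of_notMem (by simp [hbc])]
    rfl
  omega

lemma banner_of_bannerNumber_zero {K : Set (Finset V)} {d : ℕ} (hK : IsComplex K)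
    (hp : PureCplx K d) (hd : 2 ≤ d) (h0 : bannerNumber K d = 0) : Banner K d := by
  have h0' : (0 : ℕ) ∈ bannerSet K d := by
    rcases (Nat.sInf_eq_zero.mp h0) with h | h
    · exact h
    · exact absurd h (Set.nonempty_iff_ne_empty.mp (bannerSet_nonempty hp))
  have := h0' ∅ (empty_mem hK) (Finset.card_empty)
  rw [link_empty] at this
  rcases this with h | h
  · simpa using h
  · exact absurd h (isC3_impossible hp hd)

lemma bannerNumber_zero_of_banner {K : Set (Finset V)} {d : ℕ} (hb : Banner K d) :
    bannerNumber K d = 0 := by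
  have : (0 : ℕ) ∈ bannerSet K d := by
    intro σ hσ hc
    rw [Finset.card_eq_zero.mp hc, link_empty]
    left
    simpa using hb
  exact Nat.eq_zero_of_le_zero (Nat.sInf_le this)

lemma banner_link {K : Set (Finset V)} {d : ℕ} (hK : IsComplex K) (hb : Banner K d)
    (hd : 2 ≤ d) {x : V} (hx : IsVertex K x) : Banner (link K {x}) (d - 1) := by
  constructor
  · -- critical cliques of the link are faces
    intro T hclique hcard hcrit
    have hcard' : T.card = d := by omega
    have hxT : x ∉ T := by
      intro hxT
      obtain ⟨w, hw, hwx⟩ : ∃ w ∈ T, w ≠ x := by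
        by_contra hcon
        push_neg at hcon
        have : T ⊆ {x} := fun a ha => Finset.mem_singleton.mpr (hcon a ha)
        have := Finset.card_le_card this
        simp at this
        omega
      have := hclique x hxT w hw (Ne.symm hwx)
      exact (Finset.disjoint_singleton_right.mp this.1) (by simp)
    have hedge : ∀ v ∈ T, ({x, v} : Finset V) ∈ K := by
      intro v hv
      obtain ⟨w, hw, hwv⟩ : ∃ w ∈ T, w ≠ v := by
        by_contra hcon
        push_neg at hcon
        have : T ⊆ {v} := fun a ha => Finset.mem_singleton.mpr (hcon a ha)
        have := Finset.card_le_card this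
        simp at this
        omega
      have hvw := hclique v hv w hw (Ne.symm hwv)
      have h2 : ({v, w} : Finset V) ∪ {x} ∈ K := hvw.2
      refine hK.2 _ h2 _ ?_
      intro a ha
      simp at ha ⊢
      tauto
    have hTK : insert x T ∈ K := by
      apply hb.1
      · intro u hu v hv huv
        rcases Finset.mem_insert.mp hu with hux | huT
        · rcases Finset.mem_insert.mp hv with hvx | hvT
          · exact absurd (hux.trans hvx.symm) huv
          · rw [hux]; exact hedge v hvT
        · rcases Finset.mem_insert.mp hv with hvx | hvT
          · rw [hvx, Finset.pair_comm]; exact hedge u huT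
          · exact link_subset_of_complex hK _ (hclique u huT v hvT huv)
      · rw [Finset.card_insert_of_notMem hxT]
        omega
      · obtain ⟨u, huT, hTu⟩ := hcrit
        refine ⟨u, Finset.mem_insert_of_mem huT, ?_⟩
        have hux : u ≠ x := fun h => hxT (h ▸ huT)
        rw [Finset.erase_insert_of_ne (Ne.symm hux)]
        have : (T.erase u) ∪ {x} ∈ K := hTu.2
        rwa [union_singleton_eq] at this
    refine ⟨Finset.disjoint_singleton_right.mpr hxT, ?_⟩
    rwa [union_singleton_eq]
  · -- no simplex boundary in the link
    rintro ⟨S₀, hS₀c, hS₀⟩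
    have hS₀c' : S₀.card = d + 1 := by omega
    have hxS₀ : x ∉ S₀ := by
      intro hxS₀
      have h1 : ({x} : Finset V) ∈ link K {x} := by
        apply hS₀
        · exact Finset.singleton_subset_iff.mpr hxS₀
        · intro h
          have := hS₀c'
          rw [← h] at this
          simp at this
          omega
      exact (Finset.disjoint_singleton_right.mp h1.1) (by simp)
    have hS₀ne : S₀.Nonempty := by
      rw [← Finset.card_pos, hS₀c']; omega
    have hS₀K : S₀ ∈ K := by
      apply hb.1
      · intro u hu v hv huv
        have hpair : ({u, v} : Finset V) ∈ link K {x} := by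
          apply hS₀
          · intro a ha
            simp at ha
            rcases ha with rfl | rfl <;> assumption
          · intro h
            have := hS₀c'
            rw [← h] at this
            have : ({u, v} : Finset V).card ≤ 2 := Finset.card_le_two
            omega
        exact link_subset_of_complex hK _ hpair
      · exact hS₀c'
      · obtain ⟨u, hu⟩ := hS₀ne
        refine ⟨u, hu, ?_⟩
        have : S₀.erase u ∈ link K {x} := by
          apply hS₀
          · exact Finset.erase_subset u S₀
          · intro h
            have := Finset.card_erase_of_mem hu
            rw [h] at this
            omega
        exact link_subset_of_complex hK _ this
    apply hb.2
    refine ⟨insert x S₀, ?_, ?_⟩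
    · rw [Finset.card_insert_of_notMem hxS₀]; omega
    · intro τ hτsub hτne
      by_cases hxτ : x ∈ τ
      · have h1 : τ.erase x ⊆ S₀ := Finset.subset_insert_iff.mp hτsub
        by_cases heq : τ.erase x = S₀
        · exfalso
          apply hτne
          rw [← Finset.insert_erase hxτ, heq]
        · have : τ.erase x ∈ link K {x} := hS₀ _ h1 heq
          have h2 : (τ.erase x) ∪ {x} ∈ K := this.2
          rwa [union_singleton_eq, Finset.insert_erase hxτ] at h2
      · have : τ ⊆ S₀ := by
          intro a ha
          rcases Finset.mem_insert.mp (hτsub ha) with rfl | h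
          · exact absurd ha hxτ
          · exact h
        exact hK.2 _ hS₀K _ this

lemma bannerNumber_link_le {K : Set (Finset V)} {d : ℕ} (h : NPMp K d) {x : V}
    (hx : IsVertex K x) (hb1 : 1 ≤ bannerNumber K d) :
    bannerNumber (link K {x}) (d - 1) ≤ bannerNumber K d - 1 := by
  set b := bannerNumber K d with hbdef
  apply Nat.sInf_le
  intro τ hτ hτc
  obtain ⟨hτd, hτm⟩ := hτ
  rw [link_link hτd]
  have hxτ : x ∉ τ := Finset.disjoint_singleton_right.mp hτd
  have hcard : (τ ∪ {x}).card = b := by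
    rw [union_singleton_eq, Finset.card_insert_of_notMem hxτ, hτc]
    omega
  have := bannerNumber_mem h.pure (K := K) (d := d) _ hτm hcard
  have harith : d - 1 - (b - 1) = d - b := by omega
  rwa [harith]

lemma no_dominating {K : Set (Finset V)} {d : ℕ} (hK : IsComplex K) (hp : PureCplx K d)
    (hb : Banner K d) {F : Finset V} {r : V} (hF : IsFacet K F) (hr : r ∉ F)
    (hadj : ∀ y ∈ F, ({r, y} : Finset V) ∈ K) : False := by
  have hFc := facet_card hp hF
  have hTy : ∀ y ∈ F, insert r (F.erase y) ∈ K := by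
    intro y hy
    apply hb.1
    · intro u hu v hv huv
      rcases Finset.mem_insert.mp hu with hur | huF
      · rcases Finset.mem_insert.mp hv with hvr | hvF
        · exact absurd (hur.trans hvr.symm) huv
        · rw [hur]; exact hadj v (Finset.mem_of_mem_erase hvF)
      · rcases Finset.mem_insert.mp hv with hvr | hvF
        · rw [hvr, Finset.pair_comm]
          exact hadj u (Finset.mem_of_mem_erase huF)
        · refine hK.2 F hF.1 _ ?_
          intro a ha
          simp at ha
          rcases ha with rfl | rfl
          · exact Finset.mem_of_mem_erase huF
          · exact Finset.mem_of_mem_erase hvF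
    · rw [Finset.card_insert_of_notMem (fun h => hr (Finset.mem_of_mem_erase h)),
        Finset.card_erase_of_mem hy, hFc]
      omega
    · refine ⟨r, Finset.mem_insert_self r _, ?_⟩
      rw [Finset.erase_insert (fun h => hr (Finset.mem_of_mem_erase h))]
      exact hK.2 F hF.1 _ (Finset.erase_subset y F)
  apply hb.2
  refine ⟨insert r F, ?_, ?_⟩
  · rw [Finset.card_insert_of_notMem hr, hFc]
  · intro τ hτsub hτne
    by_cases hrτ : r ∈ τ
    · have h1 : τ.erase r ⊆ F := Finset.subset_insert_iff.mp hτsub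
      have h2 : τ.erase r ≠ F := by
        intro h
        apply hτne
        rw [← Finset.insert_erase hrτ, h]
      obtain ⟨y, hyF, hyτ⟩ := Finset.exists_of_ssubset (lt_of_le_of_ne h1 h2)
      refine hK.2 _ (hTy y hyF) τ ?_
      intro a ha
      rcases eq_or_ne a r with hae | har
      · rw [hae]; exact Finset.mem_insert_self r _
      · have haτr : a ∈ τ.erase r := Finset.mem_erase.mpr ⟨har, ha⟩
        have haF : a ∈ F := h1 haτr
        have hay : a ≠ y := by
          intro hay
          exact hyτ (hay ▸ haτr)
        exact Finset.mem_insert_of_mem (Finset.mem_erase.mpr ⟨hay, haF⟩)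
    · have : τ ⊆ F := by
        intro a ha
        rcases Finset.mem_insert.mp (hτsub ha) with rfl | h
        · exact absurd ha hrτ
        · exact h
      exact hK.2 F hF.1 τ this

end BannerDev3

section BannerDev4
set_option linter.unusedSectionVars false
variable {V : Type*} [DecidableEq V]

/-- Connectivity of the skeleton of `K` outside a finset `S`. -/
def ConnAway (K : Set (Finset V)) (S : Finset V) : Prop :=
  ((skeleton K).induce (VS K \ ↑S)).Connected

lemma skeleton_adj_iff {K : Set (Finset V)} {a b : V} :
    (skeleton K).Adj a b ↔ a ≠ b ∧ ({a, b} : Finset V) ∈ K := Iff.rfl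

lemma skeleton_link_le {K : Set (Finset V)} (hK : IsComplex K) (σ : Finset V) {a b : V}
    (h : (skeleton (link K σ)).Adj a b) : (skeleton K).Adj a b :=
  ⟨h.1, link_subset_of_complex hK σ h.2⟩

/-- A graph hom between induced subgraphs. -/
def induceHomOfLE {W : Type*} {G G' : SimpleGraph W}
    (hGG' : ∀ a b, G.Adj a b → G'.Adj a b) {s t : Set W} (hst : s ⊆ t) :
    G.induce s →g G'.induce t where
  toFun := fun a => ⟨a.1, hst a.2⟩
  map_rel' := by
    intro a b hab
    exact hGG' _ _ hab

lemma connAway_congr {K : Set (Finset V)} {S T : Finset V}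
    (h : (VS K \ ↑S : Set V) = VS K \ ↑T) (hc : ConnAway K S) : ConnAway K T := by
  unfold ConnAway at *
  rw [← h]
  exact hc

lemma complexConnected_iff_connAway_empty {K : Set (Finset V)} :
    ComplexConnected K ↔ ConnAway K ∅ := by
  unfold ComplexConnected ConnAway VS
  rw [Finset.coe_empty, Set.diff_empty]

/-- The rerouting lemma: removing one more vertex `x` preserves connectivity as long as
the punctured link of `x` is connected. -/
lemma reroute {K : Set (Finset V)} (hK : IsComplex K) {x : V}
    {S : Finset V} (hxS : x ∈ S)
    (h1 : ConnAway K (S.erase x))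
    (h2 : ((skeleton (link K {x})).induce
      (VS (link K {x}) \ ↑(S.erase x))).Connected) :
    ConnAway K S := by
  classical
  set L : Set V := VS (link K {x}) \ ↑(S.erase x) with hLdef
  set A : Set V := VS K \ ↑S with hAdef
  set B : Set V := VS K \ ↑(S.erase x) with hBdef
  have hLx : ∀ w ∈ L, w ≠ x := by
    intro w hw
    intro hwx
    exact not_mem_VS_link x (hwx ▸ hw.1)
  have hLA : L ⊆ A := by
    rintro w ⟨hw1, hw2⟩
    refine ⟨VS_link_subset hK x hw1, ?_⟩
    intro hwS
    exact hw2 (Finset.mem_coe.mpr (Finset.mem_erase.mpr ⟨hLx w ⟨hw1, hw2⟩, hwS⟩))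
  have hAB : A ⊆ B := by
    rintro w ⟨hw1, hw2⟩
    exact ⟨hw1, fun hc => hw2 (Finset.mem_coe.mpr (Finset.mem_of_mem_erase hc))⟩
  obtain ⟨l₀⟩ := h2.nonempty
  have hl₀L : (l₀ : V) ∈ L := l₀.2
  -- the hom from the punctured link graph into the punctured skeleton
  let φ : (skeleton (link K {x})).induce L →g (skeleton K).induce A :=
    induceHomOfLE (fun a b h => skeleton_link_le hK {x} h) hLA
  -- every vertex of A reaches some vertex of L inside A
  have key : ∀ (u v : (B : Set V)), ((skeleton K).induce B).Walk u v →
      (v : V) ∈ L → ∀ huA : (u : V) ∈ A, ∃ l : V, ∃ hl : l ∈ L,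
        ((skeleton K).induce A).Reachable ⟨(u : V), huA⟩ ⟨l, hLA hl⟩ := by
    intro u v w
    induction w with
    | nil =>
      intro hvL huA
      exact ⟨_, hvL, SimpleGraph.Reachable.refl _⟩
    | @cons u c _ h p ih =>
      intro hvL huA
      by_cases huL : (u : V) ∈ L
      · exact ⟨_, huL, SimpleGraph.Reachable.refl _⟩
      · have hadj : (skeleton K).Adj (u : V) (c : V) := h
        have hux : (u : V) ≠ x := by
          intro hx'
          exact huA.2 (Finset.mem_coe.mpr (hx' ▸ hxS))
        have hcx : (c : V) ≠ x := by
          intro hcx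
          apply huL
          refine ⟨?_, ?_⟩
          · rw [vertex_link_iff]
            refine ⟨hux, ?_⟩
            have h3 : ({(u : V), (c : V)} : Finset V) ∈ K := hadj.2
            rw [hcx] at h3
            rwa [Finset.pair_comm] at h3
          · exact u.2.2
        have hcA : (c : V) ∈ A :=
          ⟨c.2.1, fun hc => (c.2.2 (Finset.mem_coe.mpr (Finset.mem_erase.mpr ⟨hcx, hc⟩)))⟩
        obtain ⟨l, hl, hreach⟩ := ih hvL hcA
        refine ⟨l, hl, ?_⟩
        refine SimpleGraph.Reachable.trans ?_ hreach
        exact SimpleGraph.Adj.reachable hadj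
  have hconn : ((skeleton K).induce A).Connected := by
    haveI : Nonempty (A : Set V) := ⟨⟨(l₀ : V), hLA hl₀L⟩⟩
    rw [SimpleGraph.connected_iff]
    refine ⟨?_, by infer_instance⟩
    rintro a b
    obtain ⟨wa⟩ := h1.preconnected ⟨(a : V), hAB a.2⟩ ⟨(l₀ : V), hAB (hLA hl₀L)⟩
    obtain ⟨wb⟩ := h1.preconnected ⟨(b : V), hAB b.2⟩ ⟨(l₀ : V), hAB (hLA hl₀L)⟩
    obtain ⟨la, hla, hra⟩ := key _ _ wa hl₀L a.2
    obtain ⟨lb, hlb, hrb⟩ := key _ _ wb hl₀L b.2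
    have hll : ((skeleton K).induce A).Reachable ⟨la, hLA hla⟩ ⟨lb, hLA hlb⟩ :=
      (h2.preconnected ⟨la, hla⟩ ⟨lb, hlb⟩).map φ
    exact (hra.trans hll).trans hrb.symm
  exact hconn

end BannerDev4

section BannerDev5
set_option linter.unusedSectionVars false
set_option maxHeartbeats 1000000
variable {V : Type*} [DecidableEq V]

lemma adj_mem_VS {K : Set (Finset V)} (hK : IsComplex K) {y z : V}
    (h : (skeleton K).Adj y z) : z ∈ VS K :=
  hK.2 _ h.2 {z} (by intro a ha; simp at ha; simp [ha])

lemma adj_mem_VS' {K : Set (Finset V)} (hK : IsComplex K) {y z : V}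
    (h : (skeleton K).Adj y z) : y ∈ VS K := adj_mem_VS hK h.symm

/-- In a 1-dimensional pseudomanifold, every vertex has exactly two neighbours. -/
lemma cyc_nbrs {K : Set (Finset V)} (h : NPMp K 1) {y : V} (hy : y ∈ VS K) :
    ∃ p q : V, p ≠ q ∧ (skeleton K).Adj y p ∧ (skeleton K).Adj y q ∧
      ∀ z, (skeleton K).Adj y z → z = p ∨ z = q := by
  obtain ⟨u, v, huv, hu, hv, hFu, hFv, huniq⟩ := ridge2_explicit h hy (Finset.card_singleton y)
  have hadj : ∀ w, w ∉ ({y} : Finset V) → IsFacet K (insert w {y}) → (skeleton K).Adj y w := by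
    intro w hw hF
    have hwy : w ≠ y := by simpa using hw
    refine ⟨hwy.symm, ?_⟩
    have hmem : insert w ({y} : Finset V) ∈ K := hF.1
    have heq : insert w ({y} : Finset V) = {y, w} := by
      ext a; simp [or_comm]
    rwa [heq] at hmem
  refine ⟨u, v, huv, hadj u hu hFu, hadj v hv hFv, ?_⟩
  intro z hz
  have hzK : ({y, z} : Finset V) ∈ K := hz.2
  have hzy : z ≠ y := fun hzy => hz.1 (hzy.symm)
  have hcard : ({y, z} : Finset V).card = 2 := by
    rw [Finset.card_insert_of_notMem (by simp [Ne.symm hzy]), Finset.card_singleton]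
  have hFz : IsFacet K ({y, z} : Finset V) := facet_of_card h.pure hzK (by omega)
  have hsub : ({y} : Finset V) ⊆ {y, z} := by intro a ha; simp at ha; simp [ha]
  rcases huniq _ hFz hsub with h1 | h1
  · left
    have : z ∈ insert u ({y} : Finset V) := by rw [← h1]; simp
    simp at this
    tauto
  · right
    have : z ∈ insert v ({y} : Finset V) := by rw [← h1]; simp
    simp at this
    tauto

/-- Closure lemma: an adjacency-closed set of vertices meeting a connected complex
contains all vertices. -/
lemma closure_all {K : Set (Finset V)} (hconn : ComplexConnected K) {C : Set V}
    (hclosed : ∀ y ∈ C, ∀ z, (skeleton K).Adj y z → z ∈ C) {w₀ : V} (hw₀ : w₀ ∈ C)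
    (hw₀VS : w₀ ∈ VS K) : ∀ y ∈ VS K, y ∈ C := by
  intro y hy
  obtain ⟨w⟩ := hconn.preconnected ⟨w₀, hw₀VS⟩ ⟨y, hy⟩
  have key : ∀ (a b : {x : V | IsVertex K x}),
      ((skeleton K).induce {x : V | IsVertex K x}).Walk a b → (a : V) ∈ C → (b : V) ∈ C := by
    intro a b w
    induction w with
    | nil => exact fun hc => hc
    | @cons a c _ hadj p ih =>
      intro haC
      exact ih (hclosed _ haC _ hadj)
  exact key _ _ w hw₀

/-- Engine 1: if the border of the removed set consists of at most the single vertex `p`,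
then the complement is connected. -/
lemma cycle_engine1 {K : Set (Finset V)} (hK : IsComplex K) (hconn : ComplexConnected K)
    {T : Finset V} {p t0 : V} (hp : p ∈ VS K \ ↑T) (ht : t0 ∈ T) (htVS : t0 ∈ VS K)
    (hborder : ∀ z ∈ VS K \ (↑T : Set V), ∀ t ∈ T, (skeleton K).Adj z t → z = p) :
    ConnAway K T := by
  classical
  set A : Set V := VS K \ ↑T with hA
  set C : Set V := {y : V | ∃ (hy : y ∈ A) (hp' : p ∈ A),
    ((skeleton K).induce A).Reachable ⟨y, hy⟩ ⟨p, hp'⟩} with hC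
  have hpC : p ∈ C := ⟨hp, hp, by rfl⟩
  have hallC : ∀ y ∈ A, y ∈ C := by
    by_contra hcon
    push_neg at hcon
    obtain ⟨a, haA, haC⟩ := hcon
    set D : Set V := {y : V | ∃ (hy : y ∈ A) (ha' : a ∈ A),
      ((skeleton K).induce A).Reachable ⟨y, hy⟩ ⟨a, ha'⟩} with hD
    have haD : a ∈ D := ⟨haA, haA, by rfl⟩
    have hDC : ∀ y ∈ D, y ∉ C := by
      rintro y ⟨hyA, haA', hya⟩ ⟨hyA', hpA', hyp⟩
      exact haC ⟨haA', hpA', hya.symm.trans hyp⟩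
    have hDclosed : ∀ y ∈ D, ∀ z, (skeleton K).Adj y z → z ∈ D := by
      rintro y hyD z hz
      obtain ⟨hyA, haA', hya⟩ := hyD
      by_cases hzT : z ∈ T
      · exfalso
        have hyp : y = p := hborder y hyA z hzT hz
        exact hDC y ⟨hyA, haA', hya⟩ (by rw [hyp]; exact hpC)
      · have hzA : z ∈ A := ⟨adj_mem_VS hK hz, hzT⟩
        refine ⟨hzA, haA', ?_⟩
        have hadj : ((skeleton K).induce A).Adj ⟨z, hzA⟩ ⟨y, hyA⟩ := hz.symm
        exact (hadj.reachable).trans hya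
    have ht0D : t0 ∈ D := closure_all hconn hDclosed haD haA.1 t0 htVS
    exact ht0D.1.2 ht
  haveI : Nonempty (A : Set V) := ⟨⟨p, hp⟩⟩
  rw [ConnAway, SimpleGraph.connected_iff]
  refine ⟨?_, by infer_instance⟩
  intro u v
  obtain ⟨hu1, hu2, hu3⟩ := hallC u.1 u.2
  obtain ⟨hv1, hv2, hv3⟩ := hallC v.1 v.2
  have hu3' : ((skeleton K).induce A).Reachable u ⟨p, hu2⟩ := hu3
  have hv3' : ((skeleton K).induce A).Reachable v ⟨p, hv2⟩ := hv3
  exact hu3'.trans hv3'.symm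

end BannerDev5

section BannerDev6
set_option linter.unusedSectionVars false
set_option maxHeartbeats 1000000
variable {V : Type*} [DecidableEq V]

/-- Engine 2 (parity): deleting `T` whose border is `{p, q}`, each attached to the rest
by exactly one edge, keeps the complement connected. -/
lemma cycle_engine2 {K : Set (Finset V)} [Fintype V] (h : NPMp K 1)
    (hconn : ComplexConnected K)
    {T : Finset V} {p q : V} (hp : p ∈ VS K \ ↑T) (hq : q ∈ VS K \ ↑T) (hpq : p ≠ q)
    (hborder : ∀ z ∈ VS K \ (↑T : Set V), ∀ t ∈ T, (skeleton K).Adj z t → z = p ∨ z = q)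
    (hpT : ∃ t0 o, t0 ∈ T ∧ o ∉ T ∧ (skeleton K).Adj p t0 ∧ (skeleton K).Adj p o ∧
      ∀ z, (skeleton K).Adj p z → z = t0 ∨ z = o) :
    ConnAway K T := by
  classical
  have hK := h.cplx
  set A : Set V := VS K \ ↑T with hA
  set C : Set V := {y : V | ∃ (hy : y ∈ A) (hp' : p ∈ A),
    ((skeleton K).induce A).Reachable ⟨y, hy⟩ ⟨p, hp'⟩} with hC
  have hpC : p ∈ C := ⟨hp, hp, by rfl⟩
  have hCA : C ⊆ A := fun y hy => hy.1
  obtain ⟨t0, o, ht0, ho, hpt0, hpo, hpnbr⟩ := hpT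
  have ht0VS : t0 ∈ VS K := adj_mem_VS hK hpt0
  have hoA : o ∈ A := ⟨adj_mem_VS hK hpo, ho⟩
  have hoC : o ∈ C := by
    refine ⟨hoA, hp, ?_⟩
    have hadj : ((skeleton K).induce A).Adj ⟨o, hoA⟩ ⟨p, hp⟩ := hpo.symm
    exact hadj.reachable
  have hCclosed : ∀ y ∈ C, ∀ z, z ∉ T → (skeleton K).Adj y z → z ∈ C := by
    rintro y ⟨hyA, hpA, hyp⟩ z hzT hz
    have hzA : z ∈ A := ⟨adj_mem_VS hK hz, hzT⟩
    refine ⟨hzA, hpA, ?_⟩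
    have hadj : ((skeleton K).induce A).Adj ⟨z, hzA⟩ ⟨y, hyA⟩ := hz.symm
    exact hadj.reachable.trans hyp
  -- Step 1 : q is reachable to p, via parity
  have hqC : q ∈ C := by
    by_contra hqC
    haveI : Fintype (C : Set V) := (Set.toFinite C).fintype
    haveI : DecidableRel ((skeleton K).induce C).Adj := Classical.decRel _
    have hpar := SimpleGraph.sum_degrees_eq_twice_card_edges ((skeleton K).induce C)
    -- degrees
    have hdeg : ∀ v : (C : Set V), ((skeleton K).induce C).degree v =
        if (v : V) = p then 1 else 2 := by
      intro v
      have hvC : (v : V) ∈ C := v.2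
      -- the two neighbours of v
      obtain ⟨a, b, hab, hva, hvb, hnbr⟩ := cyc_nbrs h (hCA hvC).1
      have hcard : ∀ (a' b' : V), a' ≠ b' → (skeleton K).Adj (v : V) a' →
          (skeleton K).Adj (v : V) b' →
          (∀ z, (skeleton K).Adj (v : V) z → z = a' ∨ z = b') →
          ∀ (inA : Bool), (inA = true ↔ (a' ∈ C ∧ b' ∈ C)) →
          ((inA = true → ((skeleton K).induce C).degree v = 2) ∧
           ((a' ∈ C ∧ b' ∉ C) → ((skeleton K).induce C).degree v = 1)) := by
        intro a' b' hab' hva' hvb' hnbr' inA hinA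
        have hdeg0 : ((skeleton K).induce C).degree v =
            (Finset.univ.filter (fun w : (C : Set V) => (w : V) = a' ∨ (w : V) = b')).card := by
          have hnb : ((skeleton K).induce C).neighborFinset v =
              Finset.univ.filter (fun w : (C : Set V) => (w : V) = a' ∨ (w : V) = b') := by
            ext w
            rw [SimpleGraph.mem_neighborFinset]
            simp only [Finset.mem_filter, Finset.mem_univ, true_and]
            constructor
            · intro hw
              exact hnbr' _ hw
            · rintro (hw | hw)
              · show (skeleton K).Adj ↑v ↑w
                rw [hw]; exact hva'
              · show (skeleton K).Adj ↑v ↑w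
                rw [hw]; exact hvb'
          rw [SimpleGraph.degree, hnb]
        constructor
        · intro htrue
          obtain ⟨haC, hbC⟩ := hinA.mp htrue
          rw [hdeg0]
          have : (Finset.univ.filter (fun w : (C : Set V) => (w : V) = a' ∨ (w : V) = b'))
              = {⟨a', haC⟩, ⟨b', hbC⟩} := by
            ext w
            simp only [Finset.mem_filter, Finset.mem_univ, true_and, Finset.mem_insert,
              Finset.mem_singleton, Subtype.ext_iff]
          rw [this]
          rw [Finset.card_insert_of_notMem (by simp [Subtype.ext_iff, hab']),
            Finset.card_singleton]
        · rintro ⟨haC, hbC⟩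
          rw [hdeg0]
          have : (Finset.univ.filter (fun w : (C : Set V) => (w : V) = a' ∨ (w : V) = b'))
              = {⟨a', haC⟩} := by
            ext w
            simp only [Finset.mem_filter, Finset.mem_univ, true_and, Finset.mem_singleton,
              Subtype.ext_iff]
            constructor
            · rintro (hw | hw)
              · exact hw
              · exact absurd (hw ▸ w.2) hbC
            · intro hw; exact Or.inl hw
          rw [this, Finset.card_singleton]
      by_cases hvp : (v : V) = p
      · -- degree of p is 1 : neighbours are t0 (deleted) and o ∈ C
        rw [if_pos hvp]
        have ht0C : t0 ∉ C := fun hc => (hCA hc).2 ht0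
        have hone := (hcard o t0 (fun hot => ho (by rw [hot]; exact ht0)) (hvp ▸ hpo) (hvp ▸ hpt0)
          (by intro z hz; rcases hpnbr z (hvp ▸ hz) with h1 | h1
              · exact Or.inr h1
              · exact Or.inl h1) false (by simp [ht0C])).2 ⟨hoC, ht0C⟩
        exact hone
      · -- degree of other vertices is 2
        rw [if_neg hvp]
        have hnT : ∀ z, (skeleton K).Adj (v : V) z → z ∉ T := by
          intro z hz hzT
          rcases hborder (v : V) (hCA hvC) z hzT hz with h1 | h1
          · exact hvp h1
          · exact hqC (h1 ▸ hvC)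
        have haC : a ∈ C := hCclosed _ hvC a (hnT a hva) hva
        have hbC : b ∈ C := hCclosed _ hvC b (hnT b hvb) hvb
        exact (hcard a b hab hva hvb hnbr true (by simp [haC, hbC])).1 rfl
    -- sum the degrees
    have hsum : ∑ v : (C : Set V), ((skeleton K).induce C).degree v =
        ∑ v : (C : Set V), (if (v : V) = p then 1 else 2) := by
      apply Finset.sum_congr rfl
      intro v _
      exact hdeg v
    have hsum2 : ∑ v : (C : Set V), (if (v : V) = p then 1 else 2) =
        1 + 2 * (Fintype.card (C : Set V) - 1) := by
      have hpmem : (⟨p, hpC⟩ : (C : Set V)) ∈ Finset.univ := Finset.mem_univ _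
      rw [← Finset.add_sum_erase _ _ hpmem]
      congr 1
      · simp
      · have : ∀ v ∈ Finset.univ.erase (⟨p, hpC⟩ : (C : Set V)),
            (if (v : V) = p then 1 else 2) = 2 := by
          intro v hv
          have hvne : v ≠ ⟨p, hpC⟩ := (Finset.mem_erase.mp hv).1
          rw [if_neg (fun hvp => hvne (Subtype.ext hvp))]
        rw [Finset.sum_congr rfl this, Finset.sum_const, Finset.card_erase_of_mem hpmem,
          Finset.card_univ, smul_eq_mul, Nat.mul_comm]
    have hcardpos : 1 ≤ Fintype.card (C : Set V) := Fintype.card_pos_iff.mpr ⟨⟨p, hpC⟩⟩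
    rw [hsum, hsum2] at hpar
    omega
  -- Step 2 : every vertex of A is in C
  have hallC : ∀ y ∈ A, y ∈ C := by
    by_contra hcon
    push_neg at hcon
    obtain ⟨a, haA, haC⟩ := hcon
    set D : Set V := {y : V | ∃ (hy : y ∈ A) (ha' : a ∈ A),
      ((skeleton K).induce A).Reachable ⟨y, hy⟩ ⟨a, ha'⟩} with hD
    have haD : a ∈ D := ⟨haA, haA, by rfl⟩
    have hDC : ∀ y ∈ D, y ∉ C := by
      rintro y ⟨hyA, haA', hya⟩ ⟨hyA', hpA', hyp⟩
      exact haC ⟨haA', hpA', hya.symm.trans hyp⟩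
    have hDclosed : ∀ y ∈ D, ∀ z, (skeleton K).Adj y z → z ∈ D := by
      rintro y hyD z hz
      obtain ⟨hyA, haA', hya⟩ := hyD
      by_cases hzT : z ∈ T
      · exfalso
        rcases hborder y hyA z hzT hz with h1 | h1
        · exact hDC y ⟨hyA, haA', hya⟩ (by rw [h1]; exact hpC)
        · exact hDC y ⟨hyA, haA', hya⟩ (by rw [h1]; exact hqC)
      · have hzA : z ∈ A := ⟨adj_mem_VS hK hz, hzT⟩
        refine ⟨hzA, haA', ?_⟩
        have hadj : ((skeleton K).induce A).Adj ⟨z, hzA⟩ ⟨y, hyA⟩ := hz.symm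
        exact hadj.reachable.trans hya
    have ht0D : t0 ∈ D := closure_all hconn hDclosed haD haA.1 t0 ht0VS
    exact ht0D.1.2 ht0
  haveI : Nonempty (A : Set V) := ⟨⟨p, hp⟩⟩
  rw [ConnAway, SimpleGraph.connected_iff]
  refine ⟨?_, by infer_instance⟩
  intro u v
  obtain ⟨hu1, hu2, hu3⟩ := hallC u.1 u.2
  obtain ⟨hv1, hv2, hv3⟩ := hallC v.1 v.2
  have hu3' : ((skeleton K).induce A).Reachable u ⟨p, hu2⟩ := hu3
  have hv3' : ((skeleton K).induce A).Reachable v ⟨p, hv2⟩ := hv3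
  exact hu3'.trans hv3'.symm

end BannerDev6

section BannerDev7
set_option linter.unusedSectionVars false
set_option maxHeartbeats 1000000
variable {V : Type*} [DecidableEq V]

lemma npmp_conn {K : Set (Finset V)} {d : ℕ} (h : NPMp K d) (hd : 1 ≤ d) :
    ComplexConnected K := by
  have := h.normal ∅ (empty_mem h.cplx) (by simpa)
  rwa [link_empty] at this

lemma nbr_pair_with {K : Set (Finset V)} (h : NPMp K 1) {y t' : V}
    (hadj : (skeleton K).Adj y t') :
    ∃ o, o ≠ t' ∧ (skeleton K).Adj y o ∧ ∀ z, (skeleton K).Adj y z → z = t' ∨ z = o := by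
  have hyVS : y ∈ VS K := adj_mem_VS' h.cplx hadj
  obtain ⟨u, v, huv, hyu, hyv, hnbr⟩ := cyc_nbrs h hyVS
  rcases hnbr t' hadj with h1 | h1
  · refine ⟨v, ?_, hyv, ?_⟩
    · rw [h1]; exact fun hvu => huv hvu.symm
    · intro z hz
      rcases hnbr z hz with h2 | h2
      · left; rw [h2, h1]
      · right; exact h2
  · refine ⟨u, ?_, hyu, ?_⟩
    · rw [h1]; exact huv
    · intro z hz
      rcases hnbr z hz with h2 | h2
      · right; exact h2
      · left; rw [h2, h1]

/-- Deleting one vertex from a 1-dimensional normal pseudomanifold keeps it connected. -/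
lemma one_dim_delete_one {K : Set (Finset V)} [Fintype V] (h : NPMp K 1)
    (hconn : ComplexConnected K) (t : V) : ConnAway K ({t} : Finset V) := by
  by_cases htVS : t ∈ VS K
  · obtain ⟨a, b, hab, hta, htb, hnbr⟩ := cyc_nbrs h htVS
    have haVS : a ∈ VS K := adj_mem_VS h.cplx hta
    have hbVS : b ∈ VS K := adj_mem_VS h.cplx htb
    have hat : a ≠ t := fun hat => hta.ne (hat.symm)
    have hbt : b ≠ t := fun hbt => htb.ne (hbt.symm)
    obtain ⟨oa, hoa1, hoa2, hoa3⟩ := nbr_pair_with h hta.symm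
    obtain ⟨ob, hob1, hob2, hob3⟩ := nbr_pair_with h htb.symm
    refine cycle_engine2 h hconn (T := {t}) (p := a) (q := b)
      ⟨haVS, by simpa using hat⟩ ⟨hbVS, by simpa using hbt⟩ hab ?_ ?_
    · intro z hz t' ht' hzt'
      have ht'' : t' = t := by simpa using ht'
      rw [ht''] at hzt'
      exact hnbr z hzt'.symm
    · exact ⟨t, oa, by simp, by simpa using fun h' => hoa1 h', hta.symm, hoa2, hoa3⟩
  · have hset : VS K \ (↑({t} : Finset V) : Set V) = VS K := by
      rw [Finset.coe_singleton]
      exact Set.diff_singleton_eq_self htVS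
    rw [ConnAway, hset]
    exact hconn

/-- Deleting both endpoints of an edge from a 1-dimensional normal pseudomanifold keeps
it connected. -/
lemma one_dim_delete_edge {K : Set (Finset V)} [Fintype V] (h : NPMp K 1)
    (hconn : ComplexConnected K) {t₁ t₂ : V} (hadj : (skeleton K).Adj t₁ t₂) :
    ConnAway K ({t₁, t₂} : Finset V) := by
  have ht₁VS : t₁ ∈ VS K := adj_mem_VS' h.cplx hadj
  have ht₂VS : t₂ ∈ VS K := adj_mem_VS h.cplx hadj
  obtain ⟨p, hp1, hp2, hp3⟩ := nbr_pair_with h hadj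
  obtain ⟨q, hq1, hq2, hq3⟩ := nbr_pair_with h hadj.symm
  have hpVS : p ∈ VS K := adj_mem_VS h.cplx hp2
  have hqVS : q ∈ VS K := adj_mem_VS h.cplx hq2
  have hpt₁ : p ≠ t₁ := fun hc => hp2.ne hc.symm
  have hqt₂ : q ≠ t₂ := fun hc => hq2.ne hc.symm
  have hpT : p ∉ ({t₁, t₂} : Finset V) := by simp [hpt₁, hp1]
  have hqT : q ∉ ({t₁, t₂} : Finset V) := by simp [hq1, hqt₂]
  have hborder : ∀ z ∈ VS K \ (↑({t₁, t₂} : Finset V) : Set V),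
      ∀ t ∈ ({t₁, t₂} : Finset V), (skeleton K).Adj z t → z = p ∨ z = q := by
    intro z hz t ht hzt
    have hzT := hz.2
    simp only [Finset.coe_insert, Finset.coe_singleton, Set.mem_insert_iff,
      Set.mem_singleton_iff] at hzT
    push_neg at hzT
    rcases Finset.mem_insert.mp ht with rfl | ht'
    · rcases hp3 z hzt.symm with h1 | h1
      · exact absurd h1 hzT.2
      · exact Or.inl h1
    · have htt : t = t₂ := by simpa using ht'
      rw [htt] at hzt
      rcases hq3 z hzt.symm with h1 | h1
      · exact absurd h1 hzT.1
      · exact Or.inr h1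
  by_cases hpq : p = q
  · refine cycle_engine1 h.cplx hconn (T := {t₁, t₂}) (p := p)
      ⟨hpVS, by simpa using hpT⟩ (by simp) ht₁VS ?_
    intro z hz t ht hzt
    rcases hborder z hz t ht hzt with h1 | h1
    · exact h1
    · rw [h1, hpq]
  · -- p's neighbours are t₁ and o_p with o_p ∉ T
    obtain ⟨op, hop1, hop2, hop3⟩ := nbr_pair_with h hp2.symm
    have hopt₂ : op ≠ t₂ := by
      intro hc
      have : (skeleton K).Adj t₂ p := (hc ▸ hop2).symm
      rcases hq3 p this with h1 | h1
      · exact hpt₁ h1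
      · exact hpq h1
    refine cycle_engine2 h hconn (T := {t₁, t₂}) (p := p) (q := q)
      ⟨hpVS, by simpa using hpT⟩ ⟨hqVS, by simpa using hqT⟩ hpq hborder ?_
    exact ⟨t₁, op, by simp, by simp [hop1, hopt₂], hp2.symm, hop2, hop3⟩

end BannerDev7

section BannerDev8
set_option linter.unusedSectionVars false
set_option maxHeartbeats 1000000
variable {V : Type*} [DecidableEq V]

/-- If the removed set contains no face of cardinality `d`, the complement of the removed
set in a normal `d`-pseudomanifold is connected. -/
lemma N_claim [Fintype V] (d : ℕ) : ∀ (S : Finset V) (K : Set (Finset V)), 1 ≤ d → NPMp K d →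
    (∀ ρ ∈ K, ρ.card = d → ¬ (↑ρ : Set V) ⊆ (↑S : Set V)) → ConnAway K S := by
  induction d with
  | zero =>
    intro S K h1
    exact absurd h1 (by omega)
  | succ d ih =>
    intro S
    induction S using Finset.strongInductionOn with
    | _ S ihS =>
      intro K hd hK hno
      by_cases hex : ∃ x ∈ S, x ∈ VS K
      · obtain ⟨x, hxS, hxVS⟩ := hex
        rcases Nat.eq_zero_or_pos d with hd0 | hd1
        · -- dimension 1 : contradiction, x itself is a 1-face inside S
          exfalso
          refine hno {x} hxVS (by simp [hd0]) ?_
          simp [hxS]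
        · -- recurse on S.erase x and on the link of x
          have h1 : ConnAway K (S.erase x) := by
            refine ihS (S.erase x) (Finset.erase_ssubset hxS) K hd hK ?_
            intro ρ hρ hc hsub
            refine hno ρ hρ hc (subset_trans hsub ?_)
            intro a ha
            exact Finset.mem_coe.mpr (Finset.mem_of_mem_erase (Finset.mem_coe.mp ha))
          have hL : NPMp (link K {x}) d := npmp_link hK (by omega) hxVS
          have hno' : ∀ τ ∈ link K {x}, τ.card = d →
              ¬ (↑τ : Set V) ⊆ (↑(S.erase x) : Set V) := by
            intro τ hτ hc hsub
            have hxτ : x ∉ τ := Finset.disjoint_singleton_right.mp hτ.1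
            have hρK : insert x τ ∈ K := by
              have := hτ.2
              rwa [union_singleton_eq] at this
            refine hno (insert x τ) hρK
              (by rw [Finset.card_insert_of_notMem hxτ, hc]) ?_
            intro a ha
            rcases Finset.mem_insert.mp (Finset.mem_coe.mp ha) with rfl | haτ
            · exact Finset.mem_coe.mpr hxS
            · exact Finset.mem_coe.mpr
                (Finset.mem_of_mem_erase (Finset.mem_coe.mp (hsub (Finset.mem_coe.mpr haτ))))
          have hlink : ConnAway (link K {x}) (S.erase x) := ih (S.erase x) (link K {x})
            hd1 hL hno'
          exact reroute hK.cplx hxS h1 hlink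
      · push_neg at hex
        have hset : VS K \ (↑S : Set V) = VS K := by
          ext y
          exact ⟨fun hy => hy.1, fun hy => ⟨hy, fun hyS => hex y (Finset.mem_coe.mp hyS) hy⟩⟩
        rw [ConnAway, hset]
        exact npmp_conn hK (by omega)

end BannerDev8

section BannerDev9
set_option linter.unusedSectionVars false
set_option maxHeartbeats 1000000
variable {V : Type*} [DecidableEq V]

lemma connAway_agree {K : Set (Finset V)} {S T : Finset V}
    (h : ∀ a ∈ VS K, a ∈ S ↔ a ∈ T) (hc : ConnAway K S) : ConnAway K T := by
  refine connAway_congr ?_ hc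
  ext a
  simp only [Set.mem_diff, Finset.mem_coe]
  constructor
  · rintro ⟨h1, h2⟩; exact ⟨h1, fun hc' => h2 ((h a h1).mpr hc')⟩
  · rintro ⟨h1, h2⟩; exact ⟨h1, fun hc' => h2 ((h a h1).mp hc')⟩

lemma connAway_empty {K : Set (Finset V)} (h : ComplexConnected K) : ConnAway K ∅ :=
  complexConnected_iff_connAway_empty.mp h

/-- Reroute with an agreeing removal set for the link. -/
lemma reroute2 {K : Set (Finset V)} {x : V} {S : Finset V} (hK : IsComplex K)
    (hxS : x ∈ S) (h1 : ConnAway K (S.erase x)) {S'' : Finset V}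
    (hagree : ∀ a ∈ VS (link K {x}), a ∈ S'' ↔ a ∈ S.erase x)
    (h2 : ConnAway (link K {x}) S'') : ConnAway K S := by
  refine reroute hK hxS h1 ?_
  have := connAway_agree (K := link K {x}) (S := S'') (T := S.erase x) hagree h2
  exact this

lemma exists_facet_npmp {K : Set (Finset V)} {d : ℕ} (h : NPMp K d) :
    ∃ F, IsFacet K F := by
  obtain ⟨F, hF, -⟩ := exists_facet h.pure (empty_mem h.cplx)
  exact ⟨F, hF⟩

lemma facet_subset_VS {K : Set (Finset V)} (hK : IsComplex K) {F : Finset V}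
    (hF : F ∈ K) : (↑F : Set V) ⊆ VS K := by
  intro a ha
  exact mem_VS_of_mem hK hF (Finset.mem_coe.mp ha)

lemma VS_ncard_ge_face {K : Set (Finset V)} [Fintype V] (hK : IsComplex K) {F : Finset V}
    (hF : F ∈ K) : F.card ≤ (VS K).ncard := by
  have h1 : (↑F : Set V).ncard ≤ (VS K).ncard :=
    Set.ncard_le_ncard (facet_subset_VS hK hF) (Set.toFinite _)
  rwa [Set.ncard_coe_finset] at h1

/-- the vertices of a face of the link of `x` are vertices of the link. -/
lemma face_link_subset_VS {K : Set (Finset V)} (hK : IsComplex K) {x : V}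
    {τ : Finset V} (hτ : τ ∈ link K {x}) {a : V} (ha : a ∈ τ) : a ∈ VS (link K {x}) :=
  mem_VS_of_mem (isComplex_link hK (by
    have := hτ.2
    exact hK.2 _ this _ (by intro b hb; simp at hb; simp [hb]))) hτ ha

end BannerDev9
section BannerDev9b
set_option linter.unusedSectionVars false
variable {V : Type*} [DecidableEq V]

/-- In a 0-dimensional pseudomanifold the banner condition fails. -/
lemma banner_zero_false {K : Set (Finset V)} (hK : NPMp K 0) : ¬ Banner K 0 := by
  intro hBan
  obtain ⟨u, v, huv, hu, hv, hFu, hFv, -⟩ :=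
    ridge2_explicit hK (empty_mem hK.cplx) (Finset.card_empty)
  refine hBan.2 ⟨{u, v}, ?_, ?_⟩
  · rw [Finset.card_insert_of_notMem (by simp [huv]), Finset.card_singleton]
  · intro τ hτsub hτne
    have hc2 : ({u, v} : Finset V).card = 2 := by
      rw [Finset.card_insert_of_notMem (by simp [huv]), Finset.card_singleton]
    have hτlt : τ.card < 2 := by
      rcases lt_or_eq_of_le (Finset.card_le_card hτsub) with h | h
      · omega
      · exact absurd (Finset.eq_of_subset_of_card_le hτsub (by omega)) hτne
    interval_cases h : τ.card
    · rw [Finset.card_eq_zero.mp h]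
      exact empty_mem hK.cplx
    · obtain ⟨w, hw⟩ := Finset.card_eq_one.mp h
      have hwuv : w ∈ ({u, v} : Finset V) := hτsub (by rw [hw]; simp)
      rw [hw]
      rcases Finset.mem_insert.mp hwuv with rfl | hwv
      · have : insert w (∅ : Finset V) = {w} := rfl
        exact this ▸ hFu.1
      · have hwv' : w = v := by simpa using hwv
        subst hwv'
        have : insert w (∅ : Finset V) = {w} := rfl
        exact this ▸ hFv.1

end BannerDev9b

section BannerDev10
set_option linter.unusedSectionVars false
set_option maxHeartbeats 4000000
variable {V : Type*} [DecidableEq V]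

lemma finset_card_le_VS {K : Set (Finset V)} [Fintype V] {t : Finset V}
    (h : ∀ a ∈ t, a ∈ VS K) : t.card ≤ (VS K).ncard := by
  have h1 : (↑t : Set V).ncard ≤ (VS K).ncard :=
    Set.ncard_le_ncard (fun a ha => h a (Finset.mem_coe.mp ha)) (Set.toFinite _)
  rwa [Set.ncard_coe_finset] at h1

lemma grand [Fintype V] : ∀ d : ℕ, ∀ K : Set (Finset V), NPMp K d →
    (2 * d - bannerNumber K d < (VS K).ncard) ∧
    (∀ S : Finset V, (↑S : Set V) ⊆ VS K → S.card + 1 ≤ 2 * d - bannerNumber K d →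
      ConnAway K S) ∧
    (∀ S F : Finset V, (↑S : Set V) ⊆ VS K → Banner K d → IsFacet K F → F ⊆ S →
      (S \ F).card ≤ d - 2 → ConnAway K S) ∧
    (∀ S ρ : Finset V, (↑S : Set V) ⊆ VS K → Banner K d → ρ ∈ K → ρ.card = d → ρ ⊆ S →
      (S \ ρ).card ≤ d - 1 → ConnAway K S) := by
  intro d
  induction d with
  | zero =>
    intro K hK
    obtain ⟨F, hF⟩ := exists_facet_npmp hK
    have h1 : F.card ≤ (VS K).ncard := VS_ncard_ge_face hK.cplx hF.1
    have h2 := facet_card hK.pure hF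
    refine ⟨by omega, ?_, ?_, ?_⟩
    · intro S _ harith
      exfalso; omega
    · intro S F' _ hBan hF' hF'S hextra
      exact absurd hBan (banner_zero_false hK)
    · intro S ρ _ hBan hρ hρc hρS hextra
      exact absurd hBan (banner_zero_false hK)
  | succ d ih =>
    intro K hK
    classical
    have hD1 : 1 ≤ d + 1 := by omega
    have hKc := hK.cplx
    have hconn : ComplexConnected K := npmp_conn hK hD1
    obtain ⟨b, hbdef⟩ : ∃ b, b = bannerNumber K (d + 1) := ⟨_, rfl⟩
    have triple : ∀ n : ℕ, ∀ S : Finset V, S.card ≤ n →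
        (((↑S : Set V) ⊆ VS K → S.card + 1 ≤ 2 * (d + 1) - b → ConnAway K S) ∧
         (∀ F : Finset V, (↑S : Set V) ⊆ VS K → Banner K (d + 1) → IsFacet K F → F ⊆ S →
            (S \ F).card ≤ (d + 1) - 2 → ConnAway K S) ∧
         (∀ ρ : Finset V, (↑S : Set V) ⊆ VS K → Banner K (d + 1) → ρ ∈ K →
            ρ.card = d + 1 → ρ ⊆ S → (S \ ρ).card ≤ d → ConnAway K S)) := by
      intro n
      induction n with
      | zero =>
        intro S hS
        have hSempty : S = ∅ := Finset.card_eq_zero.mp (le_antisymm hS (Nat.zero_le _))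
        subst hSempty
        refine ⟨fun _ _ => connAway_empty hconn, ?_, ?_⟩
        · intro F _ _ hF hFS _
          exfalso
          have h1 := facet_card hK.pure hF
          rw [Finset.subset_empty.mp hFS] at h1
          simp at h1
        · intro ρ _ _ hρ hρc hρS _
          exfalso
          rw [Finset.subset_empty.mp hρS] at hρc
          simp at hρc
      | succ n ihn =>
        intro S hS
        -- ===================== C part =====================
        have Cpart : ∀ F : Finset V, (↑S : Set V) ⊆ VS K → Banner K (d + 1) →
            IsFacet K F → F ⊆ S → (S \ F).card ≤ (d + 1) - 2 → ConnAway K S := by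
          intro F hsub hBan hF hFS hextra
          have hFc := facet_card hK.pure hF
          have hb0 : b = 0 := hbdef.trans (bannerNumber_zero_of_banner hBan)
          have hScard : (S \ F).card + F.card = S.card :=
            Finset.card_sdiff_add_card_eq_card hFS
          rcases Nat.eq_zero_or_pos d with hd0 | hd1
          · -- dimension 1 : S = F is an edge
            subst hd0
            have hSF : S = F := by
              have h0 : (S \ F).card = 0 := by omega
              exact Finset.Subset.antisymm
                (Finset.sdiff_eq_empty_iff_subset.mp (Finset.card_eq_zero.mp h0)) hFS
            obtain ⟨t₁, t₂, hne, hFt⟩ := Finset.card_eq_two.mp (by omega : F.card = 2)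
            have hadj : (skeleton K).Adj t₁ t₂ := ⟨hne, by rw [← hFt]; exact hF.1⟩
            rw [hSF, hFt]
            exact one_dim_delete_edge hK hconn hadj
          · -- dimension ≥ 2
            have Ccore : ∀ x ∈ F,
                ((S \ F).filter (· ∈ VS (link K {x}))).card ≤ d - 2 → ConnAway K S := by
              intro x hxF hsmall
              have hxS : x ∈ S := hFS hxF
              have hxVS : x ∈ VS K := hsub (Finset.mem_coe.mpr hxS)
              have hcardS : S.card ≤ 2 * d + 1 := by omega
              have h1 : ConnAway K (S.erase x) := by
                refine (ihn (S.erase x) (by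
                  have := Finset.card_erase_of_mem hxS
                  omega)).1 ?_ ?_
                · intro a ha
                  exact hsub (Finset.mem_coe.mpr
                    (Finset.mem_of_mem_erase (Finset.mem_coe.mp ha)))
                · have := Finset.card_erase_of_mem hxS
                  omega
              set Δ : Set (Finset V) := link K {x} with hΔ
              have hL : NPMp Δ d := npmp_link hK hD1 hxVS
              have hBanΔ : Banner Δ d := banner_link hKc hBan (by omega) hxVS
              have hF' : IsFacet Δ (F.erase x) := isFacet_link_erase hKc hK.pure hF hxF
              obtain ⟨S'', hS''⟩ : ∃ t : Finset V, t = (S.erase x).filter (· ∈ VS Δ) :=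
                ⟨_, rfl⟩
              have hS''sub : (↑S'' : Set V) ⊆ VS Δ := by
                intro a ha
                rw [hS''] at ha
                exact (Finset.mem_filter.mp (Finset.mem_coe.mp ha)).2
              have hF'S'' : F.erase x ⊆ S'' := by
                rw [hS'']
                intro a ha
                refine Finset.mem_filter.mpr ⟨?_, ?_⟩
                · exact Finset.mem_erase.mpr ⟨(Finset.mem_erase.mp ha).1,
                    hFS (Finset.mem_erase.mp ha).2⟩
                · exact face_link_subset_VS hKc hF'.1 ha
              have hext' : (S'' \ F.erase x).card ≤ d - 2 := by
                rw [hS'']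
                refine le_trans (Finset.card_le_card ?_) hsmall
                intro a ha
                obtain ⟨haS'', haF'⟩ := Finset.mem_sdiff.mp ha
                obtain ⟨haSx, haVSΔ⟩ := Finset.mem_filter.mp haS''
                refine Finset.mem_filter.mpr ⟨Finset.mem_sdiff.mpr
                  ⟨Finset.mem_of_mem_erase haSx, ?_⟩, haVSΔ⟩
                intro haF
                exact haF' (Finset.mem_erase.mpr ⟨(Finset.mem_erase.mp haSx).1, haF⟩)
              have hC : ConnAway Δ S'' :=
                (ih Δ hL).2.2.1 S'' (F.erase x) hS''sub hBanΔ hF' hF'S'' hext'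
              refine reroute2 hKc hxS h1 ?_ hC
              intro a haVSΔ
              simp only [hS'', Finset.mem_filter]
              exact ⟨fun h => h.1, fun h => ⟨h, haVSΔ⟩⟩
            by_cases hR : (S \ F).Nonempty
            · obtain ⟨r, hr⟩ := hR
              have hrS : r ∈ S := (Finset.mem_sdiff.mp hr).1
              have hrF : r ∉ F := (Finset.mem_sdiff.mp hr).2
              have hnd : ¬ ∀ y ∈ F, ({r, y} : Finset V) ∈ K :=
                fun hall => no_dominating hKc hK.pure hBan hF hrF hall
              push_neg at hnd
              obtain ⟨x, hxF, hxr⟩ := hnd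
              refine Ccore x hxF ?_
              have hrVSΔ : r ∉ VS (link K {x}) := by
                rw [vertex_link_iff]
                rintro ⟨-, hmem⟩
                exact hxr (by rwa [Finset.pair_comm] at hmem)
              have hsub2 : (S \ F).filter (· ∈ VS (link K {x})) ⊆ (S \ F).erase r := by
                intro a ha
                obtain ⟨haSF, haVSΔ⟩ := Finset.mem_filter.mp ha
                exact Finset.mem_erase.mpr ⟨fun har => hrVSΔ (har ▸ haVSΔ), haSF⟩
              have h3 := Finset.card_le_card hsub2
              have h4 := Finset.card_erase_of_mem hr
              omega
            · have hRe : S \ F = ∅ := Finset.not_nonempty_iff_eq_empty.mp hR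
              obtain ⟨x, hxF⟩ : F.Nonempty := by
                rw [← Finset.card_pos, hFc]; omega
              refine Ccore x hxF ?_
              rw [hRe]
              simp
        -- ===================== V part =====================
        have Vpart : ∀ ρ : Finset V, (↑S : Set V) ⊆ VS K → Banner K (d + 1) → ρ ∈ K →
            ρ.card = d + 1 → ρ ⊆ S → (S \ ρ).card ≤ d → ConnAway K S := by
          intro ρ hsub hBan hρ hρc hρS hextra
          have hb0 : b = 0 := hbdef.trans (bannerNumber_zero_of_banner hBan)
          have hScard : (S \ ρ).card + ρ.card = S.card :=
            Finset.card_sdiff_add_card_eq_card hρS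
          rcases Nat.eq_zero_or_pos d with hd0 | hd1
          · -- dimension 1 : S = ρ is a single vertex
            subst hd0
            have hSρ : S = ρ := by
              have h0 : (S \ ρ).card = 0 := by omega
              exact Finset.Subset.antisymm
                (Finset.sdiff_eq_empty_iff_subset.mp (Finset.card_eq_zero.mp h0)) hρS
            obtain ⟨t, ht⟩ := Finset.card_eq_one.mp (by omega : ρ.card = 1)
            rw [hSρ, ht]
            exact one_dim_delete_one hK hconn t
          · -- dimension ≥ 2
            obtain ⟨u, v, huv, huρ, hvρ, hFu, hFv, huniq⟩ := ridge2_explicit hK hρ hρc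
            have fromFacet : ∀ w, w ∉ ρ → IsFacet K (insert w ρ) → w ∈ S → ConnAway K S := by
              intro w hwρ hFw hwS
              refine Cpart (insert w ρ) hsub hBan hFw
                (Finset.insert_subset hwS hρS) ?_
              have hsub2 : S \ insert w ρ ⊆ (S \ ρ).erase w := by
                intro a ha
                obtain ⟨haS, haw⟩ := Finset.mem_sdiff.mp ha
                simp only [Finset.mem_insert, not_or] at haw
                exact Finset.mem_erase.mpr ⟨haw.1, Finset.mem_sdiff.mpr ⟨haS, haw.2⟩⟩
              have h3 := Finset.card_le_card hsub2
              have h4 := Finset.card_erase_of_mem (Finset.mem_sdiff.mpr ⟨hwS, hwρ⟩)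
              omega
            by_cases huS : u ∈ S
            · exact fromFacet u huρ hFu huS
            by_cases hvS : v ∈ S
            · exact fromFacet v hvρ hFv hvS
            -- a fully attached extra vertex gives a facet inside S by bannerness
            by_cases hw : ∃ w ∈ S \ ρ, ∀ y ∈ ρ, ({w, y} : Finset V) ∈ K
            · obtain ⟨w, hwSρ, hwadj⟩ := hw
              have hwS : w ∈ S := (Finset.mem_sdiff.mp hwSρ).1
              have hwρ : w ∉ ρ := (Finset.mem_sdiff.mp hwSρ).2
              have hTK : insert w ρ ∈ K := by
                apply hBan.1
                · intro a ha c hc hac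
                  rcases Finset.mem_insert.mp ha with haw | haρ
                  · rcases Finset.mem_insert.mp hc with hcw | hcρ
                    · exact absurd (haw.trans hcw.symm) hac
                    · rw [haw]; exact hwadj c hcρ
                  · rcases Finset.mem_insert.mp hc with hcw | hcρ
                    · rw [hcw, Finset.pair_comm]; exact hwadj a haρ
                    · refine hKc.2 ρ hρ _ ?_
                      intro z hz
                      simp at hz
                      rcases hz with rfl | rfl
                      · exact haρ
                      · exact hcρ
                · rw [Finset.card_insert_of_notMem hwρ, hρc]
                · exact ⟨w, Finset.mem_insert_self w ρ, by
                    rw [Finset.erase_insert hwρ]; exact hρ⟩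
              have hTF : IsFacet K (insert w ρ) := facet_of_card hK.pure hTK
                (by rw [Finset.card_insert_of_notMem hwρ, hρc])
              exact fromFacet w hwρ hTF hwS
            · push_neg at hw
              -- the core rerouting
              have Vcore : ∀ x ∈ ρ,
                  ((S \ ρ).filter (· ∈ VS (link K {x}))).card ≤ d - 1 → ConnAway K S := by
                intro x hxρ hsmall
                have hxS : x ∈ S := hρS hxρ
                have hxVS : x ∈ VS K := hsub (Finset.mem_coe.mpr hxS)
                have hcardS : S.card ≤ 2 * d + 1 := by omega
                have h1 : ConnAway K (S.erase x) := by
                  refine (ihn (S.erase x) (by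
                    have := Finset.card_erase_of_mem hxS
                    omega)).1 ?_ ?_
                  · intro a ha
                    exact hsub (Finset.mem_coe.mpr
                      (Finset.mem_of_mem_erase (Finset.mem_coe.mp ha)))
                  · have := Finset.card_erase_of_mem hxS
                    omega
                set Δ : Set (Finset V) := link K {x} with hΔ
                have hL : NPMp Δ d := npmp_link hK hD1 hxVS
                have hBanΔ : Banner Δ d := banner_link hKc hBan (by omega) hxVS
                have hρ' : ρ.erase x ∈ Δ := by
                  refine ⟨by simp, ?_⟩
                  rw [union_singleton_eq, Finset.insert_erase hxρ]
                  exact hρ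
                have hρ'c : (ρ.erase x).card = d := by
                  rw [Finset.card_erase_of_mem hxρ, hρc]
                  omega
                obtain ⟨S'', hS''⟩ : ∃ t : Finset V, t = (S.erase x).filter (· ∈ VS Δ) :=
                ⟨_, rfl⟩
                have hS''sub : (↑S'' : Set V) ⊆ VS Δ := by
                  intro a ha
                  rw [hS''] at ha
                  exact (Finset.mem_filter.mp (Finset.mem_coe.mp ha)).2
                have hρ'S'' : ρ.erase x ⊆ S'' := by
                  rw [hS'']
                  intro a ha
                  refine Finset.mem_filter.mpr ⟨?_, ?_⟩
                  · exact Finset.mem_erase.mpr ⟨(Finset.mem_erase.mp ha).1,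
                      hρS (Finset.mem_erase.mp ha).2⟩
                  · exact face_link_subset_VS hKc hρ' ha
                have hext' : (S'' \ ρ.erase x).card ≤ d - 1 := by
                  rw [hS'']
                  refine le_trans (Finset.card_le_card ?_) hsmall
                  intro a ha
                  obtain ⟨haS'', haρ'⟩ := Finset.mem_sdiff.mp ha
                  obtain ⟨haSx, haVSΔ⟩ := Finset.mem_filter.mp haS''
                  refine Finset.mem_filter.mpr ⟨Finset.mem_sdiff.mpr
                    ⟨Finset.mem_of_mem_erase haSx, ?_⟩, haVSΔ⟩
                  intro haρ
                  exact haρ' (Finset.mem_erase.mpr ⟨(Finset.mem_erase.mp haSx).1, haρ⟩)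
                have hC : ConnAway Δ S'' :=
                  (ih Δ hL).2.2.2 S'' (ρ.erase x) hS''sub hBanΔ hρ' hρ'c hρ'S'' hext'
                refine reroute2 hKc hxS h1 ?_ hC
                intro a haVSΔ
                simp only [hS'', Finset.mem_filter]
                exact ⟨fun h => h.1, fun h => ⟨h, haVSΔ⟩⟩
              by_cases hRn : (S \ ρ).Nonempty
              · obtain ⟨w, hwSρ⟩ := hRn
                obtain ⟨x, hxρ, hxw⟩ := hw w hwSρ
                refine Vcore x hxρ ?_
                have hwVSΔ : w ∉ VS (link K {x}) := by
                  rw [vertex_link_iff]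
                  rintro ⟨-, hmem⟩
                  exact hxw (by rwa [Finset.pair_comm] at hmem)
                have hsub2 : (S \ ρ).filter (· ∈ VS (link K {x})) ⊆ (S \ ρ).erase w := by
                  intro a ha
                  obtain ⟨haSρ, haVSΔ⟩ := Finset.mem_filter.mp ha
                  exact Finset.mem_erase.mpr ⟨fun haw => hwVSΔ (haw ▸ haVSΔ), haSρ⟩
                have h3 := Finset.card_le_card hsub2
                have h4 := Finset.card_erase_of_mem hwSρ
                omega
              · have hRe : S \ ρ = ∅ := Finset.not_nonempty_iff_eq_empty.mp hRn
                obtain ⟨x, hxρ⟩ : ρ.Nonempty := by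
                  rw [← Finset.card_pos, hρc]; omega
                refine Vcore x hxρ ?_
                rw [hRe]
                simp
        -- ===================== M part =====================
        have Mpart : (↑S : Set V) ⊆ VS K → S.card + 1 ≤ 2 * (d + 1) - b → ConnAway K S := by
          intro hsub harith
          rcases Nat.eq_zero_or_pos d with hd0 | hd1
          · -- dimension 1
            subst hd0
            have hcard : S.card ≤ 1 := by omega
            rcases Nat.eq_zero_or_pos S.card with h0 | h1
            · rw [Finset.card_eq_zero.mp h0]
              exact connAway_empty hconn
            · obtain ⟨t, ht⟩ := Finset.card_eq_one.mp (le_antisymm hcard h1)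
              rw [ht]
              exact one_dim_delete_one hK hconn t
          · by_cases hface : ∃ ρ ∈ K, ρ.card = d + 1 ∧ ρ ⊆ S
            · obtain ⟨ρ, hρ, hρc, hρS⟩ := hface
              by_cases hb0 : b = 0
              · have hBan : Banner K (d + 1) :=
                  banner_of_bannerNumber_zero hKc hK.pure (by omega) (hbdef ▸ hb0)
                refine Vpart ρ hsub hBan hρ hρc hρS ?_
                have := Finset.card_sdiff_add_card_eq_card hρS
                omega
              · have hb1 : 1 ≤ b := by omega
                obtain ⟨x, hxρ⟩ : ρ.Nonempty := by
                  rw [← Finset.card_pos, hρc]; omega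
                have hxS : x ∈ S := hρS hxρ
                have hxVS : x ∈ VS K := hsub (Finset.mem_coe.mpr hxS)
                have h1 : ConnAway K (S.erase x) := by
                  refine (ihn (S.erase x) (by
                    have := Finset.card_erase_of_mem hxS
                    omega)).1 ?_ ?_
                  · intro a ha
                    exact hsub (Finset.mem_coe.mpr
                      (Finset.mem_of_mem_erase (Finset.mem_coe.mp ha)))
                  · have := Finset.card_erase_of_mem hxS
                    omega
                set Δ : Set (Finset V) := link K {x} with hΔ
                have hL : NPMp Δ d := npmp_link hK hD1 hxVS
                have hble : bannerNumber Δ d ≤ bannerNumber K (d + 1) - 1 :=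
                  bannerNumber_link_le hK hxVS (by omega)
                obtain ⟨S'', hS''⟩ : ∃ t : Finset V, t = (S.erase x).filter (· ∈ VS Δ) :=
                  ⟨_, rfl⟩
                have hS''sub : (↑S'' : Set V) ⊆ VS Δ := by
                  intro a ha
                  rw [hS''] at ha
                  exact (Finset.mem_filter.mp (Finset.mem_coe.mp ha)).2
                have hS''card : S''.card + 1 ≤ S.card := by
                  rw [hS'']
                  have h3 := Finset.card_le_card
                    (Finset.filter_subset (· ∈ VS Δ) (S.erase x))
                  have h4 := Finset.card_erase_of_mem hxS
                  have h5 : 1 ≤ S.card := Finset.card_pos.mpr ⟨x, hxS⟩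
                  omega
                have hC : ConnAway Δ S'' := by
                  refine (ih Δ hL).2.1 S'' hS''sub ?_
                  omega
                refine reroute2 hKc hxS h1 ?_ hC
                intro a haVSΔ
                simp only [hS'', Finset.mem_filter]
                exact ⟨fun h => h.1, fun h => ⟨h, haVSΔ⟩⟩
            · push_neg at hface
              exact N_claim (d + 1) S K (by omega) hK
                (fun ρ hρ hc hsub' => hface ρ hρ hc (Finset.coe_subset.mp hsub'))
        exact ⟨Mpart, Cpart, Vpart⟩
    have Mfinal : ∀ S : Finset V, (↑S : Set V) ⊆ VS K →
        S.card + 1 ≤ 2 * (d + 1) - b → ConnAway K S :=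
      fun S hsub h => (triple S.card S le_rfl).1 hsub h
    have Cfinal := fun S => (triple S.card S le_rfl).2.1
    have Vfinal := fun S => (triple S.card S le_rfl).2.2
    -- ===================== A part =====================
    have Apart : 2 * (d + 1) - b < (VS K).ncard := by
      obtain ⟨F₀, hF₀⟩ := exists_facet_npmp hK
      have hF₀c := facet_card hK.pure hF₀
      have hF₀VS := VS_ncard_ge_face hKc hF₀.1
      by_cases hbD : d + 1 ≤ b
      · omega
      · push_neg at hbD
        rcases Nat.eq_zero_or_pos d with hd0 | hd1
        · -- dimension 1 : at least 3 vertices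
          subst hd0
          obtain ⟨y, hy⟩ : F₀.Nonempty := by rw [← Finset.card_pos, hF₀c]; omega
          have hyVS : y ∈ VS K := mem_VS_of_mem hKc hF₀.1 hy
          obtain ⟨p, q, hpq, hyp, hyq, -⟩ := cyc_nbrs hK hyVS
          have h3 : ({y, p, q} : Finset V).card ≤ (VS K).ncard := by
            refine finset_card_le_VS ?_
            intro a ha
            simp at ha
            rcases ha with rfl | rfl | rfl
            · exact hyVS
            · exact adj_mem_VS hKc hyp
            · exact adj_mem_VS hKc hyq
          have hcard3 : ({y, p, q} : Finset V).card = 3 := by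
            rw [Finset.card_insert_of_notMem (by simp [hyp.ne, hyq.ne]),
              Finset.card_insert_of_notMem (by simp [hpq]), Finset.card_singleton]
          omega
        · -- dimension ≥ 2
          obtain ⟨v, hv⟩ : F₀.Nonempty := by rw [← Finset.card_pos, hF₀c]; omega
          have hvVS : v ∈ VS K := mem_VS_of_mem hKc hF₀.1 hv
          set Δ : Set (Finset V) := link K {v} with hΔ
          have hL : NPMp Δ d := npmp_link hK hD1 hvVS
          have ihA := (ih Δ hL).1
          have hvΔ : v ∉ VS Δ := not_mem_VS_link v
          have hΔVS : VS Δ ⊆ VS K := VS_link_subset hKc v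
          by_cases hb0 : b = 0
          · have hBan : Banner K (d + 1) :=
              banner_of_bannerNumber_zero hKc hK.pure (by omega) (hbdef ▸ hb0)
            have hb'0 : bannerNumber Δ d = 0 :=
              bannerNumber_zero_of_banner (banner_link hKc hBan (by omega) hvVS)
            rw [hb'0] at ihA
            -- construct a facet not containing v
            have hτ : F₀.erase v ∈ K := hKc.2 F₀ hF₀.1 _ (Finset.erase_subset v F₀)
            have hτc : (F₀.erase v).card = d + 1 := by
              rw [Finset.card_erase_of_mem hv, hF₀c]
              omega
            obtain ⟨u₁, u₂, hu12, hu1, hu2, hGF1, hGF2, huniq⟩ :=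
              ridge2_explicit hK hτ hτc
            have hvmem : ∀ w, w ∉ F₀.erase v → F₀ = insert w (F₀.erase v) → v = w := by
              intro w hw heq
              have : v ∈ insert w (F₀.erase v) := heq ▸ hv
              rcases Finset.mem_insert.mp this with h | h
              · exact h
              · exact absurd h (by simp)
            have hGne : ∃ G, IsFacet K G ∧ v ∉ G := by
              rcases huniq F₀ hF₀ (Finset.erase_subset v F₀) with h | h
              · refine ⟨insert u₂ (F₀.erase v), hGF2, ?_⟩
                intro hvG
                rcases Finset.mem_insert.mp hvG with h' | h'
                · exact hu12 ((hvmem u₁ hu1 h).symm.trans h')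
                · simp at h'
              · refine ⟨insert u₁ (F₀.erase v), hGF1, ?_⟩
                intro hvG
                rcases Finset.mem_insert.mp hvG with h' | h'
                · exact hu12 (h'.symm.trans (hvmem u₂ hu2 h))
                · simp at h'
            obtain ⟨G, hG, hvG⟩ := hGne
            have hnd : ¬ ∀ y ∈ G, ({v, y} : Finset V) ∈ K :=
              fun hall => no_dominating hKc hK.pure hBan hG hvG hall
            push_neg at hnd
            obtain ⟨u₀, hu₀G, hu₀⟩ := hnd
            have hu₀VS : u₀ ∈ VS K := mem_VS_of_mem hKc hG.1 hu₀G
            have hu₀Δ : u₀ ∉ VS Δ := by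
              rw [vertex_link_iff]
              rintro ⟨-, hmem⟩
              exact hu₀ hmem
            have hu₀v : u₀ ≠ v := fun h => hvG (h ▸ hu₀G)
            -- count
            have hstep1 : (insert u₀ (VS Δ)).ncard = (VS Δ).ncard + 1 :=
              Set.ncard_insert_of_notMem hu₀Δ (Set.toFinite _)
            have hstep2 : (insert v (insert u₀ (VS Δ))).ncard =
                (VS Δ).ncard + 2 := by
              rw [Set.ncard_insert_of_notMem (by
                simp only [Set.mem_insert_iff]
                push_neg
                exact ⟨fun h => hu₀v h.symm, hvΔ⟩) (Set.toFinite _), hstep1]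
            have hmono : (insert v (insert u₀ (VS Δ)) : Set V).ncard ≤ (VS K).ncard := by
              refine Set.ncard_le_ncard ?_ (Set.toFinite _)
              intro a ha
              rcases ha with rfl | ha
              · exact hvVS
              · rcases ha with rfl | ha
                · exact hu₀VS
                · exact hΔVS ha
            omega
          · have hb1 : 1 ≤ b := by omega
            have hble : bannerNumber Δ d ≤ bannerNumber K (d + 1) - 1 :=
              bannerNumber_link_le hK hvVS (by omega)
            have hmono : (insert v (VS Δ) : Set V).ncard ≤ (VS K).ncard := by
              refine Set.ncard_le_ncard ?_ (Set.toFinite _)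
              intro a ha
              rcases ha with rfl | ha
              · exact hvVS
              · exact hΔVS ha
            have hstep : (insert v (VS Δ)).ncard = (VS Δ).ncard + 1 :=
              Set.ncard_insert_of_notMem hvΔ (Set.toFinite _)
            omega
    rw [← hbdef]
    exact ⟨Apart, Mfinal, Cfinal, Vfinal⟩

end BannerDev10


/-- **Main theorem.** The 1-skeleton of a normal `d`-pseudomanifold (on vertex set `V`)
is `(2d - b_Δ)`-connected, where `b_Δ` is the banner number. -/
theorem main_connectivity (K : Set (Finset V)) (d : ℕ) [Fintype V]
    (hn : NormalPM K d) (hvert : ∀ v : V, IsVertex K v) :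
    KConnected (skeleton K) (2 * d - bannerNumber K d) := by
  classical
  have hK : NPMp K d := hn.npmp
  obtain ⟨hA, hM, -, -⟩ := grand d K hK
  have hVS : VS K = Set.univ := by
    ext v
    simp only [VS, Set.mem_setOf_eq, Set.mem_univ, iff_true]
    exact hvert v
  constructor
  · rw [hVS, Set.ncard_univ, Nat.card_eq_fintype_card] at hA
    exact hA
  · intro S hScard
    have h := hM S (by rw [hVS]; exact Set.subset_univ _) (by omega)
    rw [ConnAway, hVS] at h
    have hset : (Set.univ \ (↑S : Set V)) = ((↑S : Set V)ᶜ) := by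
      ext a; simp
    rw [hset] at h
    exact h
end

section
/- Let Δ be a banner d-dimensional simplicial pseudomanifold, let x be a vertex, and let F be a facet of link_Δ(x). Let w be the unique vertex other than x with F ∪ {w} ∈ Δ. Then w is not adjacent to x in the 1-skeleton of Δ. -/
open Finset

variable {V : Type*} [DecidableEq V]

/-- In a banner pseudomanifold, if `F` is a facet of the link of `x` and `w` is the vertex
other than `x` with `F ∪ {w}` a face, then `w` is not adjacent to `x`. -/
theorem second_cofacet_vertex_not_adjacent (K : Set (Finset V)) (d : ℕ)
    (hpm : Pseudomanifold K d) (hb : Banner K d)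
    (x : V) (hx : IsVertex K x)
    (F : Finset V) (hF : IsFacet (link K {x}) F)
    (w : V) (hwx : w ≠ x) (hwF : w ∉ F) (hFw : F ∪ {w} ∈ K) :
    ({x, w} : Finset V) ∉ K := by
  intro hxw
  obtain ⟨hK, hpure, _, _⟩ := hpm
  have hdown : ∀ σ ∈ K, ∀ τ : Finset V, τ ⊆ σ → τ ∈ K := hK.2
  obtain ⟨⟨hdisj, hFx⟩, hFmax⟩ := hF
  have hxF : x ∉ F := fun h => (Finset.disjoint_left.mp hdisj h) (Finset.mem_singleton_self x)
  -- F ∪ {x} is a facet of K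
  have hfacet : IsFacet K (F ∪ {x}) := by
    refine ⟨hFx, fun G hG hsub => ?_⟩
    have hxG : x ∈ G := hsub (Finset.mem_union_right _ (Finset.mem_singleton_self x))
    have hGx : G.erase x ∈ link K {x} := by
      constructor
      · simp [Finset.disjoint_singleton_right]
      · rwa [Finset.union_comm, ← Finset.insert_eq, Finset.insert_erase hxG]
    have hFsub : F ⊆ G.erase x := by
      intro a ha
      exact Finset.mem_erase.mpr ⟨fun h => hxF (h ▸ ha), hsub (Finset.mem_union_left _ ha)⟩
    have := hFmax _ hGx hFsub
    rw [← Finset.insert_erase hxG, this, Finset.union_comm, ← Finset.insert_eq]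
  have hcardFx : (F ∪ {x}).card = d + 1 := hpure.2 _ hfacet
  have hcardF : F.card = d := by
    rw [Finset.union_comm, ← Finset.insert_eq, Finset.card_insert_of_notMem hxF] at hcardFx
    omega
  set T : Finset V := insert x (insert w F) with hT
  have hxFi : F ∪ {x} = insert x F := by rw [Finset.union_comm, ← Finset.insert_eq]
  have hwFi : F ∪ {w} = insert w F := by rw [Finset.union_comm, ← Finset.insert_eq]
  have hFxK : insert x F ∈ K := hxFi ▸ hFx
  have hFwK : insert w F ∈ K := hwFi ▸ hFw
  have hmemT : ∀ u ∈ T, u = x ∨ u = w ∨ u ∈ F := by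
    intro u hu
    simpa [hT, Finset.mem_insert] using hu
  have hpair : ∀ (G : Finset V), G ∈ K → ∀ u ∈ G, ∀ v ∈ G, ({u, v} : Finset V) ∈ K := by
    intro G hG u hu v hv
    exact hdown G hG _ (Finset.insert_subset hu (Finset.singleton_subset_iff.mpr hv))
  have hclique : IsCliqueIn K T := by
    intro u hu v hv huv
    rcases hmemT u hu with rfl | rfl | huF <;> rcases hmemT v hv with rfl | rfl | hvF
    · exact absurd rfl huv
    · exact hxw
    · exact hpair _ hFxK _ (Finset.mem_insert_self _ _) _ (Finset.mem_insert_of_mem hvF)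
    · rw [Finset.pair_comm]; exact hxw
    · exact absurd rfl huv
    · exact hpair _ hFwK _ (Finset.mem_insert_self _ _) _ (Finset.mem_insert_of_mem hvF)
    · exact hpair _ hFxK _ (Finset.mem_insert_of_mem huF) _ (Finset.mem_insert_self _ _)
    · exact hpair _ hFwK _ (Finset.mem_insert_of_mem huF) _ (Finset.mem_insert_self _ _)
    · exact hpair _ hFxK _ (Finset.mem_insert_of_mem huF) _ (Finset.mem_insert_of_mem hvF)
  have hxw' : x ≠ w := fun h => hwx h.symm
  have hxT : x ∉ insert w F := by simp [hxw', hxF]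
  have hcardT : T.card = d + 2 := by
    rw [hT, Finset.card_insert_of_notMem hxT, Finset.card_insert_of_notMem hwF, hcardF]
  have herase : ∀ v ∈ T, T.erase v ∈ K := by
    intro v hv
    rcases hmemT v hv with rfl | rfl | hvF
    · rw [hT, Finset.erase_insert hxT]
      exact hFwK
    · have : T.erase v = insert x F := by
        ext a
        simp only [hT, Finset.mem_erase, Finset.mem_insert]
        constructor
        · rintro ⟨hne, rfl | rfl | h⟩
          · exact Or.inl rfl
          · exact absurd rfl hne
          · exact Or.inr h
        · rintro (rfl | h)
          · exact ⟨hxw', Or.inl rfl⟩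
          · exact ⟨fun e => hwF (e ▸ h), Or.inr (Or.inr h)⟩
      rw [this]; exact hFxK
    · apply hb.1
      · intro a ha b hb' hab
        exact hclique a (Finset.erase_subset _ _ ha) b (Finset.erase_subset _ _ hb') hab
      · rw [Finset.card_erase_of_mem hv, hcardT]
        omega
      · refine ⟨x, Finset.mem_erase.mpr ⟨fun h => hxF (h ▸ hvF), Finset.mem_insert_self _ _⟩, ?_⟩
        apply hdown _ hFwK
        intro a ha
        rw [Finset.mem_erase, Finset.mem_erase] at ha
        rcases hmemT a (ha.2.2) with rfl | rfl | haF
        · exact absurd rfl ha.1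
        · exact Finset.mem_insert_self _ _
        · exact Finset.mem_insert_of_mem haF
  apply hb.2
  refine ⟨T, hcardT, fun τ hτ hne => ?_⟩
  obtain ⟨v, hvT, hvτ⟩ : ∃ v ∈ T, v ∉ τ := by
    by_contra h
    push_neg at h
    exact hne (Finset.Subset.antisymm hτ h)
  exact hdown _ (herase v hvT) τ (fun a ha => Finset.mem_erase.mpr ⟨fun h => hvτ (h ▸ ha), hτ ha⟩)
end
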